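/- arXiv:1404.6299 — 4 statements merged into one kernel-verified Lean document; each statement's English description precedes it below -/
import Mathlib

section
/- Let H be a finite bipartite graph with partite sets X and T such that no vertex of T is isolated, and suppose that for every edge xy with x ∈ X and y ∈ T we have deg(y) ≥ deg(x). Then H has a matching saturating T. -/
open SimpleGraph

namespace VizingTwoFactor

variable {V : Type*}

/-- The degree of a vertex, as the `ncard` of its neighbor set. -/
noncomputable def ndeg (G : SimpleGraph V) (v : V) : ℕ :=
  (G.neighborSet v).ncard

/-- `G` is bipartite with parts `X` and `T`. -/
def IsBipartiteWith (G : SimpleGraph V) (X T : Set V) : Prop :=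
  Disjoint X T ∧ ∀ u v : V, G.Adj u v → (u ∈ X ∧ v ∈ T) ∨ (u ∈ T ∧ v ∈ X)

/-- The set of neighbors of a set of vertices. -/
def NSet (G : SimpleGraph V) (A : Set V) : Set V :=
  {v | ∃ a ∈ A, G.Adj a v}

/-- `G` has a matching saturating the vertex set `T`. -/
def HasMatchingSaturating (G : SimpleGraph V) (T : Set V) : Prop :=
  ∃ M : G.Subgraph, M.IsMatching ∧ T ⊆ M.verts

/-- Number of (ordered) adjacent pairs with first coordinate in `A` and second in `B`;
for disjoint `A`, `B` this is the number of edges between `A` and `B`. -/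
noncomputable def eBetween (G : SimpleGraph V) (A B : Set V) : ℕ :=
  {p : V × V | p.1 ∈ A ∧ p.2 ∈ B ∧ G.Adj p.1 p.2}.ncard

/-- Number of neighbors of `v` inside `A`. -/
noncomputable def degIn (G : SimpleGraph V) (A : Set V) (v : V) : ℕ :=
  (G.neighborSet v ∩ A).ncard

/-- The vertex set (in `V`) of a connected component of an induced subgraph. -/
def csupp (G : SimpleGraph V) (U : Set V) (C : (G.induce U).ConnectedComponent) : Set V :=
  Subtype.val '' C.supp

/-- The odd components of `G − (S ∪ T)` w.r.t. `(S,T)`: components sending an odd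
number of edges to `T`. -/
noncomputable def oddComps (G : SimpleGraph V) (S T : Set V) :
    Set ((G.induce (S ∪ T)ᶜ).ConnectedComponent) :=
  {C | Odd (eBetween G (csupp G (S ∪ T)ᶜ C) T)}

/-- `h_G(S,T)`: the number of odd components. -/
noncomputable def hNum (G : SimpleGraph V) (S T : Set V) : ℕ :=
  (oddComps G S T).ncard

/-- `δ_G(S,T) = 2|S| + Σ_{v∈T} deg_{G−S}(v) − 2|T| − h_G(S,T)`. -/
noncomputable def deltaST (G : SimpleGraph V) (S T : Set V) : ℤ :=
  2 * S.ncard + (∑ᶠ v ∈ T, (degIn G Sᶜ v : ℤ)) - 2 * T.ncard - hNum G S T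

/-- A barrier. -/
def IsBarrier (G : SimpleGraph V) (S T : Set V) : Prop :=
  Disjoint S T ∧ deltaST G S T ≤ -2

/-- A minimum barrier: minimizes `|S ∪ T|` among barriers. -/
def IsMinBarrier (G : SimpleGraph V) (S T : Set V) : Prop :=
  IsBarrier G S T ∧ ∀ S' T' : Set V, IsBarrier G S' T' → (S ∪ T).ncard ≤ (S' ∪ T').ncard

/-- `G` has a 2-factor: a spanning subgraph in which every vertex has degree 2. -/
def HasTwoFactor (G : SimpleGraph V) : Prop :=
  ∃ H : SimpleGraph V, H ≤ G ∧ ∀ v : V, ndeg H v = 2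

/-- `G` has a proper edge coloring with `k` colors. -/
def HasEdgeColoring (G : SimpleGraph V) (k : ℕ) : Prop :=
  ∃ f : G.edgeSet → Fin k, ∀ e₁ e₂ : G.edgeSet, e₁ ≠ e₂ →
    (∃ v : V, v ∈ (e₁ : Sym2 V) ∧ v ∈ (e₂ : Sym2 V)) → f e₁ ≠ f e₂

/-- The chromatic index `χ'(G)`. -/
noncomputable def chromIdx (G : SimpleGraph V) : ℕ :=
  sInf {k | HasEdgeColoring G k}

/-- `Δ` is the maximum degree of `G`. -/
def IsMaxDegree (G : SimpleGraph V) (Δ : ℕ) : Prop :=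
  (∀ v : V, ndeg G v ≤ Δ) ∧ ∃ v : V, ndeg G v = Δ

/-- `G` is `Δ`-critical: no isolated vertices, maximum degree `Δ`, `χ'(G) = Δ + 1`, and
`χ'(G − e) = Δ` for every edge `e`. -/
def IsDeltaCritical (G : SimpleGraph V) (Δ : ℕ) : Prop :=
  (∀ v : V, ∃ u : V, G.Adj v u) ∧ IsMaxDegree G Δ ∧ chromIdx G = Δ + 1 ∧
    ∀ e ∈ G.edgeSet, chromIdx (G.deleteEdges {e}) = Δ

/-- `T` is an independent set in `G`. -/
def IsIndep (G : SimpleGraph V) (T : Set V) : Prop :=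
  ∀ u ∈ T, ∀ v ∈ T, ¬ G.Adj u v

/-- The bipartite graph `H*` consisting of the edges of `G` between `V(G) \ T` and `T`. -/
def betweenGraph (G : SimpleGraph V) (T : Set V) : SimpleGraph V where
  Adj u v := G.Adj u v ∧ ((u ∉ T ∧ v ∈ T) ∨ (u ∈ T ∧ v ∉ T))
  symm := ⟨fun u v h => ⟨h.1.symm, h.2.elim (fun h' => Or.inr ⟨h'.2, h'.1⟩)
    (fun h' => Or.inl ⟨h'.2, h'.1⟩)⟩⟩
  loopless := ⟨fun u h => G.loopless.irrefl u h.1⟩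

theorem vizing_stmt_0 [Fintype V] (H : SimpleGraph V) (X T : Set V)
    (hbip : IsBipartiteWith H X T)
    (hnoiso : ∀ y ∈ T, ∃ x : V, H.Adj y x)
    (hdeg : ∀ x ∈ X, ∀ y ∈ T, H.Adj x y → ndeg H x ≤ ndeg H y) :
    HasMatchingSaturating H T := by
  classical
  set nb : V → Finset V := fun v => (H.neighborSet v).toFinset with hnb
  have hmemnb : ∀ u v : V, u ∈ nb v ↔ H.Adj v u := by
    intro u v; simp [hnb]
  have hdegnb : ∀ v : V, ndeg H v = (nb v).card := by
    intro v; rw [ndeg, Set.ncard_eq_toFinset_card']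
  -- a neighbor of a T-vertex is in X
  have hXadj : ∀ y ∈ T, ∀ x : V, H.Adj y x → x ∈ X := by
    intro y hy x hadj
    rcases hbip.2 y x hadj with ⟨hyX, _⟩ | ⟨_, hxX⟩
    · exact absurd hy (Set.disjoint_left.mp hbip.1 hyX)
    · exact hxX
  -- degree comparison along edges
  have hdegle : ∀ y ∈ T, ∀ x : V, H.Adj y x → (nb x).card ≤ (nb y).card := by
    intro y hy x hadj
    rw [← hdegnb, ← hdegnb]
    exact hdeg x (hXadj y hy x hadj) y hy hadj.symm
  have hpos : ∀ v x : V, H.Adj v x → 0 < (nb v).card := by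
    intro v x hadj
    exact Finset.card_pos.mpr ⟨x, (hmemnb x v).mpr hadj⟩
  -- Hall's condition
  have hall : ∀ s : Finset {y // y ∈ T}, s.card ≤ (s.biUnion fun y => nb y.1).card := by
    intro s
    set N := s.biUnion (fun y => nb y.1) with hN
    have hsub : ∀ y ∈ s, nb (y : {y // y ∈ T}).1 ⊆ N := fun y hy =>
      Finset.subset_biUnion_of_mem (fun y : {y // y ∈ T} => nb y.1) hy
    have key : (s.card : ℚ) ≤ (N.card : ℚ) := by
      have h1 : (s.card : ℚ) =
          ∑ y ∈ s, ∑ x ∈ N, if H.Adj y.1 x then ((nb y.1).card : ℚ)⁻¹ else 0 := by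
        rw [Finset.card_eq_sum_ones, Nat.cast_sum]
        refine Finset.sum_congr rfl fun y hy => ?_
        have hfil : N.filter (fun x => H.Adj y.1 x) = nb y.1 := by
          ext x
          simp only [Finset.mem_filter, hmemnb]
          exact ⟨fun h => h.2, fun h => ⟨hsub y hy ((hmemnb x y.1).mpr h), h⟩⟩
        rw [← Finset.sum_filter, hfil, Finset.sum_const, nsmul_eq_mul]
        have hposy : 0 < ((nb y.1).card : ℚ) := by
          obtain ⟨x, hx⟩ := hnoiso y.1 y.2
          exact_mod_cast hpos y.1 x hx
        field_simp
        norm_num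
      have h2 : ∑ y ∈ s, ∑ x ∈ N, (if H.Adj y.1 x then ((nb y.1).card : ℚ)⁻¹ else 0) ≤
          ∑ y ∈ s, ∑ x ∈ N, (if H.Adj y.1 x then ((nb x).card : ℚ)⁻¹ else 0) := by
        refine Finset.sum_le_sum fun y _ => Finset.sum_le_sum fun x _ => ?_
        by_cases hadj : H.Adj y.1 x
        · simp only [hadj, if_true]
          have h0 : 0 < ((nb x).card : ℚ) := by exact_mod_cast hpos x y.1 hadj.symm
          have hle : ((nb x).card : ℚ) ≤ ((nb y.1).card : ℚ) := by
            exact_mod_cast hdegle y.1 y.2 x hadj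
          exact inv_anti₀ h0 hle
        · simp [hadj]
      have h3 : ∑ y ∈ s, ∑ x ∈ N, (if H.Adj y.1 x then ((nb x).card : ℚ)⁻¹ else 0) ≤
          (N.card : ℚ) := by
        rw [Finset.sum_comm, Finset.card_eq_sum_ones, Nat.cast_sum]
        refine Finset.sum_le_sum fun x hx => ?_
        rw [← Finset.sum_filter, Finset.sum_const, nsmul_eq_mul]
        have hcard : (s.filter fun y => H.Adj y.1 x).card ≤ (nb x).card := by
          apply Finset.card_le_card_of_injOn (fun y => (y : {y // y ∈ T}).1)
          · intro y hy
            simp only [Finset.mem_coe, Finset.mem_filter] at hy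
            exact (hmemnb _ _).mpr hy.2.symm
          · intro a _ b _ hab
            exact Subtype.ext hab
        rcases Nat.eq_zero_or_pos (nb x).card with h0 | h0
        · have : (s.filter fun y => H.Adj y.1 x).card = 0 := by omega
          simp [this]
        · have h0' : (0 : ℚ) < ((nb x).card : ℚ) := by exact_mod_cast h0
          calc ((s.filter fun y => H.Adj y.1 x).card : ℚ) * ((nb x).card : ℚ)⁻¹
              ≤ ((nb x).card : ℚ) * ((nb x).card : ℚ)⁻¹ := by
                apply mul_le_mul_of_nonneg_right _ (by positivity)
                exact_mod_cast hcard
            _ = 1 := mul_inv_cancel₀ (ne_of_gt h0')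
      calc (s.card : ℚ) = _ := h1
        _ ≤ _ := h2
        _ ≤ _ := h3
    exact_mod_cast key
  obtain ⟨f, hfinj, hf⟩ :=
    (Finset.all_card_le_biUnion_card_iff_exists_injective (fun y : {y // y ∈ T} => nb y.1)).1 hall
  have hfadj : ∀ y : {y // y ∈ T}, H.Adj y.1 (f y) := fun y => (hmemnb _ _).mp (hf y)
  have hfX : ∀ y : {y // y ∈ T}, f y ∉ T := by
    intro y
    exact Set.disjoint_left.mp hbip.1 (hXadj y.1 y.2 (f y) (hfadj y))
  -- build the matching subgraph
  refine ⟨{ verts := {v | v ∈ T ∨ ∃ y : {y // y ∈ T}, f y = v}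
            Adj := fun u v => ∃ y : {y // y ∈ T}, (u = y.1 ∧ v = f y) ∨ (u = f y ∧ v = y.1)
            adj_sub := ?_
            edge_vert := ?_
            symm := ?_ }, ?_, ?_⟩
  · rintro u v ⟨y, ⟨rfl, rfl⟩ | ⟨rfl, rfl⟩⟩
    · exact hfadj y
    · exact (hfadj y).symm
  · rintro u v ⟨y, ⟨rfl, rfl⟩ | ⟨rfl, rfl⟩⟩
    · exact Or.inl y.2
    · exact Or.inr ⟨y, rfl⟩
  · constructor
    rintro u v ⟨y, ⟨rfl, rfl⟩ | ⟨rfl, rfl⟩⟩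
    · exact ⟨y, Or.inr ⟨rfl, rfl⟩⟩
    · exact ⟨y, Or.inl ⟨rfl, rfl⟩⟩
  · rintro v (hv | ⟨y₀, rfl⟩)
    · refine ⟨f ⟨v, hv⟩, ⟨⟨v, hv⟩, Or.inl ⟨rfl, rfl⟩⟩, ?_⟩
      rintro w ⟨y, ⟨hvy, rfl⟩ | ⟨hvy, rfl⟩⟩
      · have : y = ⟨v, hv⟩ := Subtype.ext hvy.symm
        rw [this]
      · exact absurd (hvy ▸ hv) (hfX y)
    · refine ⟨y₀.1, ⟨y₀, Or.inr ⟨rfl, rfl⟩⟩, ?_⟩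
      rintro w ⟨y, ⟨hvy, rfl⟩ | ⟨hvy, rfl⟩⟩
      · exact absurd (hvy ▸ y.2) (hfX y₀)
      · have : y = y₀ := hfinj hvy.symm
        rw [this]
  · intro v hv
    exact Or.inl hv

end VizingTwoFactor
end

section
/- Let R be a finite bipartite graph with partite sets A and B. Let A₁ = {x ∈ A : deg_R(x) = 1} and B₁ = N_R(A₁). If the induced bipartite subgraph R' on (A \ A₁) ∪ (B \ B₁) has a matching saturating B \ B₁, then R has a matching saturating B. -/
open SimpleGraph

namespace VizingTwoFactor

variable {V : Type*}

theorem vizing_stmt_1 [Fintype V] (R : SimpleGraph V) (A B A₁ B₁ : Set V)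
    (hbip : IsBipartiteWith R A B)
    (hA₁ : A₁ = {x ∈ A | ndeg R x = 1}) (hB₁ : B₁ = NSet R A₁)
    (hM : HasMatchingSaturating (R.induce ((A \ A₁) ∪ (B \ B₁)))
      (Subtype.val ⁻¹' (B \ B₁))) :
    HasMatchingSaturating R B := by
  classical
  obtain ⟨hdisj, hadj⟩ := hbip
  set U : Set V := (A \ A₁) ∪ (B \ B₁) with hU
  obtain ⟨M, hMmatch, hMsat⟩ := hM
  -- lift M to a subgraph of R
  let emb : R.induce U ↪g R := SimpleGraph.Embedding.induce U
  let M' : R.Subgraph := M.map emb.toHom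
  have hM'match : M'.IsMatching := hMmatch.map emb.toHom emb.injective
  have hA₁sub : A₁ ⊆ A := by rw [hA₁]; exact fun x hx => hx.1
  have hB₁sub : B₁ ⊆ B := by
    rw [hB₁]
    rintro b ⟨a, ha, hab⟩
    rcases hadj a b hab with ⟨h1, h2⟩ | ⟨h1, h2⟩
    · exact h2
    · exact absurd (hA₁sub ha) (fun h => hdisj.ne_of_mem h h1 rfl)
  -- choice function
  have hchoice : ∀ b ∈ B₁, ∃ a, a ∈ A₁ ∧ R.Adj a b := by
    rw [hB₁]; rintro b ⟨a, ha, hab⟩; exact ⟨a, ha, hab⟩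
  let f : V → V := fun b => if h : b ∈ B₁ then (hchoice b h).choose else b
  have hf : ∀ b ∈ B₁, f b ∈ A₁ ∧ R.Adj (f b) b := by
    intro b hb
    simp only [f, dif_pos hb]
    exact (hchoice b hb).choose_spec
  have hdeg1 : ∀ a ∈ A₁, ∀ b c, R.Adj a b → R.Adj a c → b = c := by
    intro a ha b c hb hc
    rw [hA₁] at ha
    have h1 : (R.neighborSet a).ncard = 1 := ha.2
    obtain ⟨x, hx⟩ := Set.ncard_eq_one.mp h1
    have hb' : b ∈ R.neighborSet a := hb
    have hc' : c ∈ R.neighborSet a := hc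
    rw [hx] at hb' hc'
    rw [hb', hc']
  have hA₁B₁ : Disjoint A₁ B₁ := Set.disjoint_of_subset hA₁sub hB₁sub hdisj
  -- the B₁-saturating matching
  let N : R.Subgraph :=
    { verts := B₁ ∪ f '' B₁
      Adj := fun u v => (u ∈ B₁ ∧ v = f u) ∨ (v ∈ B₁ ∧ u = f v)
      adj_sub := by
        rintro u v (⟨hu, rfl⟩ | ⟨hv, rfl⟩)
        · exact ((hf u hu).2).symm
        · exact (hf v hv).2
      edge_vert := by
        rintro u v (⟨hu, rfl⟩ | ⟨hv, rfl⟩)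
        · exact Or.inl hu
        · exact Or.inr ⟨v, hv, rfl⟩
      symm := by
        refine ⟨?_⟩
        rintro u v (h | h)
        · exact Or.inr h
        · exact Or.inl h }
  have hNmatch : N.IsMatching := by
    rintro v (hv | ⟨b, hb, rfl⟩)
    · refine ⟨f v, Or.inl ⟨hv, rfl⟩, ?_⟩
      rintro w (⟨_, rfl⟩ | ⟨hw, rfl⟩)
      · rfl
      · exact absurd hv (fun h => hA₁B₁.ne_of_mem (hf w hw).1 h rfl)
    · refine ⟨b, Or.inr ⟨hb, rfl⟩, ?_⟩
      rintro w (⟨hv, rfl⟩ | ⟨hw, hw'⟩)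
      · exact absurd hv (fun h => hA₁B₁.ne_of_mem (hf b hb).1 h rfl)
      · exact hdeg1 (f b) (hf b hb).1 w b (hw' ▸ (hf w hw).2) (hf b hb).2
  have hNverts : N.verts ⊆ B₁ ∪ A₁ := by
    rintro v (hv | ⟨b, hb, rfl⟩)
    · exact Or.inl hv
    · exact Or.inr (hf b hb).1
  have hM'verts : M'.verts ⊆ U := by
    rintro v ⟨⟨x, hx⟩, _, rfl⟩
    exact hx
  have hdsupp : Disjoint M'.support N.support := by
    have kd : Disjoint U (B₁ ∪ A₁) := by
      rw [Set.disjoint_union_left]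
      constructor
      · rw [Set.disjoint_union_right]
        exact ⟨Set.disjoint_of_subset Set.diff_subset hB₁sub hdisj,
          Set.disjoint_sdiff_left⟩
      · rw [Set.disjoint_union_right]
        exact ⟨Set.disjoint_sdiff_left,
          Set.disjoint_of_subset Set.diff_subset hA₁sub hdisj.symm⟩
    exact Set.disjoint_of_subset (hM'match.support_eq_verts ▸ hM'verts)
      (hNmatch.support_eq_verts ▸ hNverts) kd
  refine ⟨M' ⊔ N, hM'match.sup hNmatch hdsupp, ?_⟩
  intro b hb
  by_cases hb1 : b ∈ B₁
  · exact Or.inr (Or.inl hb1)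
  · have hbU : b ∈ U := Or.inr ⟨hb, hb1⟩
    have : (⟨b, hbU⟩ : U) ∈ M.verts := hMsat ⟨hb, hb1⟩
    exact Or.inl ⟨⟨b, hbU⟩, this, rfl⟩

end VizingTwoFactor
end

section
/- Let G be a Δ-critical graph and let T ⊆ V(G) be an independent set. Let X' = V(G) \ T and let H* be the bipartite graph on parts X' and T whose edges are exactly the edges of G between X' and T. Let δ₀ be the number of vertices of T whose degree in G equals Δ. Then for every edge xy of H* with x ∈ X' and y ∈ T, deg_{H*}(y) ≥ deg_{H*}(x) + 1 − δ₀ + σ_x, where σ_x is the number of neighbors of x in X' whose degree in G is less than Δ. -/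
open SimpleGraph
open scoped Classical

namespace VizingTwoFactor

variable {V : Type*}

/-- A proper edge coloring of `H` with colors `< k`, given as a symmetric function. -/
structure Col (H : SimpleGraph V) (k : ℕ) where
  c : V → V → ℕ
  symm : ∀ u v, c u v = c v u
  lt : ∀ u v, H.Adj u v → c u v < k
  inj : ∀ v a b, H.Adj v a → H.Adj v b → c v a = c v b → a = b

/-- Missing colors at a vertex. -/
noncomputable def Col.Mis {H : SimpleGraph V} {k : ℕ} (φ : Col H k) (v : V) : Finset ℕ :=
  (Finset.range k).filter (fun m => ∀ u, H.Adj v u → φ.c v u ≠ m)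

lemma Col.mem_Mis {H : SimpleGraph V} {k : ℕ} (φ : Col H k) {v : V} {m : ℕ} :
    m ∈ φ.Mis v ↔ m < k ∧ ∀ u, H.Adj v u → φ.c v u ≠ m := by
  simp [Col.Mis]

lemma Col.exists_of_not_mem_Mis {H : SimpleGraph V} {k : ℕ} (φ : Col H k) {v : V} {m : ℕ}
    (hm : m < k) (h : m ∉ φ.Mis v) : ∃ u, H.Adj v u ∧ φ.c v u = m := by
  rw [Col.mem_Mis] at h
  push_neg at h
  exact h hm

section Card

set_option linter.unusedSectionVars false

variable [Fintype V] {H : SimpleGraph V} {k : ℕ}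

lemma Col.present_card (φ : Col H k) (v : V) :
    ((fun u => φ.c v u) '' (H.neighborSet v)).ncard = ndeg H v := by
  rw [ndeg]
  exact Set.ncard_image_of_injOn (fun a ha b hb hab => φ.inj v a b ha hb hab)

lemma Col.ndeg_le (φ : Col H k) (v : V) : ndeg H v ≤ k := by
  rw [← φ.present_card v]
  have hsub : ((fun u => φ.c v u) '' (H.neighborSet v)) ⊆ Set.Iio k := by
    rintro m ⟨u, hu, rfl⟩
    exact φ.lt v u hu
  calc ((fun u => φ.c v u) '' (H.neighborSet v)).ncard ≤ (Set.Iio k).ncard :=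
        Set.ncard_le_ncard hsub (Set.finite_Iio k)
    _ = k := by rw [← Finset.coe_range, Set.ncard_coe_finset, Finset.card_range]

lemma Col.card_Mis (φ : Col H k) (v : V) : (φ.Mis v).card = k - ndeg H v := by
  classical
  have hsplit : (Finset.range k) = (φ.Mis v) ∪ ((Finset.range k).filter
      (fun m => ∃ u, H.Adj v u ∧ φ.c v u = m)) := by
    ext m
    simp only [Col.Mis, Finset.mem_union, Finset.mem_filter, Finset.mem_range]
    constructor
    · intro hm
      by_cases h : ∀ u, H.Adj v u → φ.c v u ≠ m
      · exact Or.inl ⟨hm, h⟩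
      · push_neg at h
        exact Or.inr ⟨hm, h⟩
    · rintro (⟨h, _⟩ | ⟨h, _⟩) <;> exact h
  have hdisj : Disjoint (φ.Mis v) ((Finset.range k).filter
      (fun m => ∃ u, H.Adj v u ∧ φ.c v u = m)) := by
    rw [Finset.disjoint_left]
    intro m hm hm'
    rw [Col.mem_Mis] at hm
    simp only [Finset.mem_filter] at hm'
    obtain ⟨u, hu, hc⟩ := hm'.2
    exact hm.2 u hu hc
  have hset : (((Finset.range k).filter (fun m => ∃ u, H.Adj v u ∧ φ.c v u = m)) : Set ℕ)
      = (fun u => φ.c v u) '' (H.neighborSet v) := by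
    ext m
    simp only [Finset.coe_filter, Finset.mem_range, Set.mem_setOf_eq, Set.mem_image,
      mem_neighborSet]
    constructor
    · rintro ⟨_, u, hu, hc⟩; exact ⟨u, hu, hc⟩
    · rintro ⟨u, hu, hc⟩; exact ⟨hc ▸ φ.lt v u hu, u, hu, hc⟩
  have hcard2 : ((Finset.range k).filter (fun m => ∃ u, H.Adj v u ∧ φ.c v u = m)).card
      = ndeg H v := by
    rw [← Set.ncard_coe_finset, hset, φ.present_card]
  have := congrArg Finset.card hsplit
  rw [Finset.card_union_of_disjoint hdisj, Finset.card_range, hcard2] at this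
  omega

lemma Col.Mis_nonempty (φ : Col H k) {v : V} (h : ndeg H v < k) : (φ.Mis v).Nonempty := by
  rw [← Finset.card_pos, φ.card_Mis v]
  omega

end Card

/-- Equivalence with `HasEdgeColoring`. -/
lemma hasEdgeColoring_of_col {H : SimpleGraph V} {k : ℕ} (φ : Col H k) :
    HasEdgeColoring H k := by
  classical
  have hlt : ∀ e : H.edgeSet, Sym2.lift ⟨φ.c, φ.symm⟩ (e : Sym2 V) < k := by
    rintro ⟨e, he⟩
    induction e with
    | _ u v => exact φ.lt u v (by rwa [SimpleGraph.mem_edgeSet] at he)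
  refine ⟨fun e => ⟨Sym2.lift ⟨φ.c, φ.symm⟩ (e : Sym2 V), hlt e⟩, ?_⟩
  intro e₁ e₂ hne ⟨v, hv₁, hv₂⟩
  have h1 := Sym2.other_spec hv₁
  have h2 := Sym2.other_spec hv₂
  set a := Sym2.Mem.other hv₁ with ha'
  set b := Sym2.Mem.other hv₂ with hb'
  have ha : H.Adj v a := by rw [← SimpleGraph.mem_edgeSet, h1]; exact e₁.2
  have hb : H.Adj v b := by rw [← SimpleGraph.mem_edgeSet, h2]; exact e₂.2
  have hab : a ≠ b := by
    intro h
    exact hne (Subtype.ext (by rw [← h1, ← h2, h]))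
  intro hf
  apply hab
  apply φ.inj v a b ha hb
  have hval : Sym2.lift ⟨φ.c, φ.symm⟩ (e₁ : Sym2 V) = Sym2.lift ⟨φ.c, φ.symm⟩ (e₂ : Sym2 V) :=
    congrArg Fin.val hf
  rw [← h1, ← h2, Sym2.lift_mk, Sym2.lift_mk] at hval
  exact hval

lemma col_of_hasEdgeColoring {H : SimpleGraph V} {k : ℕ} (h : HasEdgeColoring H k) :
    Nonempty (Col H k) := by
  classical
  obtain ⟨f, hf⟩ := h
  refine ⟨⟨fun u v => if h : H.Adj u v then (f ⟨s(u, v), h⟩ : ℕ) else 0, ?_, ?_, ?_⟩⟩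
  · intro u v
    by_cases h : H.Adj u v
    · rw [dif_pos h, dif_pos h.symm]
      exact congrArg (fun e => ((f e : Fin k) : ℕ)) (Subtype.ext Sym2.eq_swap)
    · rw [dif_neg h, dif_neg (fun h' => h h'.symm)]
  · intro u v h
    rw [dif_pos h]
    exact (f _).isLt
  · intro v a b ha hb hc
    rw [dif_pos ha, dif_pos hb] at hc
    by_contra hab
    have hne : (⟨s(v, a), ha⟩ : H.edgeSet) ≠ ⟨s(v, b), hb⟩ := by
      intro h
      exact hab (Sym2.congr_right.mp (congrArg Subtype.val h))
    exact hf _ _ hne ⟨v, by simp, by simp⟩ (Fin.val_injective hc)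

lemma hasEdgeColoring_mono {G : SimpleGraph V} {k k' : ℕ} (h : k ≤ k')
    (hc : HasEdgeColoring G k) : HasEdgeColoring G k' := by
  obtain ⟨f, hf⟩ := hc
  exact ⟨fun e => Fin.castLE h (f e), fun e₁ e₂ hne hv heq =>
    hf e₁ e₂ hne hv (by exact Fin.castLE_injective h heq)⟩

lemma hasEdgeColoring_exists [Fintype V] (G : SimpleGraph V) : ∃ k, HasEdgeColoring G k := by
  classical
  letI : Fintype G.edgeSet := Set.Finite.fintype (Set.toFinite _)
  obtain ⟨g⟩ : Nonempty (G.edgeSet ≃ Fin (Fintype.card G.edgeSet)) := ⟨Fintype.equivFin _⟩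
  refine ⟨Fintype.card G.edgeSet, ?_⟩
  refine ⟨fun e => g e, ?_⟩
  intro e₁ e₂ hne _ heq
  exact hne (g.injective heq)

lemma hasEdgeColoring_chromIdx [Fintype V] (G : SimpleGraph V) :
    HasEdgeColoring G (chromIdx G) :=
  Nat.sInf_mem (hasEdgeColoring_exists G)

lemma not_hasEdgeColoring_of_lt {G : SimpleGraph V} {k : ℕ} (h : k < chromIdx G) :
    ¬ HasEdgeColoring G k := by
  intro hc
  have hk : k ∈ {k | HasEdgeColoring G k} := hc
  have h2 : chromIdx G ≤ k := Nat.sInf_le hk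
  omega

/-! ### Edge surgery on colorings -/

/-- Color swap function. -/
def sw (α γ m : ℕ) : ℕ := if m = α then γ else if m = γ then α else m

lemma sw_invol (α γ m : ℕ) : sw α γ (sw α γ m) = m := by
  unfold sw
  by_cases h1 : m = α <;> by_cases h2 : m = γ <;> by_cases h3 : γ = α <;> simp_all
  
lemma sw_inj (α γ : ℕ) : Function.Injective (sw α γ) := by
  intro a b h
  have := congrArg (sw α γ) h
  rwa [sw_invol, sw_invol] at this

lemma sw_lt {α γ k : ℕ} (hα : α < k) (hγ : γ < k) {m : ℕ} (hm : m < k) : sw α γ m < k := by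
  unfold sw
  split <;> [exact hγ; skip]
  split <;> [exact hα; exact hm]

lemma sw_of_ne {α γ m : ℕ} (h1 : m ≠ α) (h2 : m ≠ γ) : sw α γ m = m := by
  unfold sw
  rw [if_neg h1, if_neg h2]

lemma sw_left (α γ : ℕ) : sw α γ α = γ := by unfold sw; simp

lemma sw_right (α γ : ℕ) : sw α γ γ = α := by
  unfold sw
  by_cases h : γ = α <;> simp [h]

/-- Adding (or recoloring) the single edge `xy` with color `α`. -/
noncomputable def Col.addEdge {H H' : SimpleGraph V} {k : ℕ} (φ : Col H k) (x y : V)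
    (α : ℕ) (hxy : x ≠ y)
    (hH' : ∀ u v, H'.Adj u v ↔ H.Adj u v ∨ (u = x ∧ v = y) ∨ (u = y ∧ v = x))
    (hα : α < k) (hmx : ∀ u, H.Adj x u → φ.c x u ≠ α) (hmy : ∀ u, H.Adj y u → φ.c y u ≠ α) :
    Col H' k where
  c := fun u v => if (u = x ∧ v = y) ∨ (u = y ∧ v = x) then α else φ.c u v
  symm := by
    intro u v
    by_cases h : (u = x ∧ v = y) ∨ (u = y ∧ v = x)
    · rw [if_pos h, if_pos (by tauto)]
    · rw [if_neg h, if_neg (by tauto), φ.symm]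
  lt := by
    intro u v huv
    by_cases h : (u = x ∧ v = y) ∨ (u = y ∧ v = x)
    · rwa [if_pos h]
    · rw [if_neg h]
      rw [hH'] at huv
      rcases huv with h' | h' | h'
      · exact φ.lt u v h'
      · exact absurd (Or.inl h') h
      · exact absurd (Or.inr h') h
  inj := by
    intro v a b ha hb hc
    rw [hH'] at ha hb
    by_cases hvx : v = x
    · subst hvx
      have hcx : ∀ w, (if (v = v ∧ w = y) ∨ (v = y ∧ w = v) then α else φ.c v w)
          = if w = y then α else φ.c v w := by
        intro w
        by_cases hw : w = y
        · rw [if_pos (Or.inl ⟨rfl, hw⟩), if_pos hw]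
        · rw [if_neg ?_, if_neg hw]
          rintro (⟨_, h⟩ | ⟨h, _⟩)
          · exact hw h
          · exact hxy h
      rw [hcx, hcx] at hc
      have ha' : a = y ∨ H.Adj v a := by
        rcases ha with h | ⟨_, h⟩ | ⟨h, _⟩
        · exact Or.inr h
        · exact Or.inl h
        · exact absurd h hxy
      have hb' : b = y ∨ H.Adj v b := by
        rcases hb with h | ⟨_, h⟩ | ⟨h, _⟩
        · exact Or.inr h
        · exact Or.inl h
        · exact absurd h hxy
      by_cases hay : a = y
      · by_cases hby : b = y
        · exact hay.trans hby.symm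
        · rw [if_pos hay, if_neg hby] at hc
          have hb'' : H.Adj v b := hb'.resolve_left hby
          exact absurd hc.symm (hmx b hb'')
      · by_cases hby : b = y
        · rw [if_neg hay, if_pos hby] at hc
          have ha'' : H.Adj v a := ha'.resolve_left hay
          exact absurd hc (hmx a ha'')
        · rw [if_neg hay, if_neg hby] at hc
          exact φ.inj v a b (ha'.resolve_left hay) (hb'.resolve_left hby) hc
    · by_cases hvy : v = y
      · subst hvy
        have hcy : ∀ w, (if (v = x ∧ w = v) ∨ (v = v ∧ w = x) then α else φ.c v w)
            = if w = x then α else φ.c v w := by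
          intro w
          by_cases hw : w = x
          · rw [if_pos (Or.inr ⟨rfl, hw⟩), if_pos hw]
          · rw [if_neg ?_, if_neg hw]
            rintro (⟨h, _⟩ | ⟨_, h⟩)
            · exact hvx h
            · exact hw h
        rw [hcy, hcy] at hc
        have ha' : a = x ∨ H.Adj v a := by
          rcases ha with h | ⟨h, _⟩ | ⟨_, h⟩
          · exact Or.inr h
          · exact absurd h hvx
          · exact Or.inl h
        have hb' : b = x ∨ H.Adj v b := by
          rcases hb with h | ⟨h, _⟩ | ⟨_, h⟩
          · exact Or.inr h
          · exact absurd h hvx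
          · exact Or.inl h
        by_cases hay : a = x
        · by_cases hby : b = x
          · exact hay.trans hby.symm
          · rw [if_pos hay, if_neg hby] at hc
            exact absurd hc.symm (hmy b (hb'.resolve_left hby))
        · by_cases hby : b = x
          · rw [if_neg hay, if_pos hby] at hc
            exact absurd hc (hmy a (ha'.resolve_left hay))
          · rw [if_neg hay, if_neg hby] at hc
            exact φ.inj v a b (ha'.resolve_left hay) (hb'.resolve_left hby) hc
      · have hcond : ∀ w, ¬((v = x ∧ w = y) ∨ (v = y ∧ w = x)) := by
          intro w h
          rcases h with ⟨h, _⟩ | ⟨h, _⟩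
          · exact hvx h
          · exact hvy h
        rw [if_neg (hcond a), if_neg (hcond b)] at hc
        have ha' : H.Adj v a := by
          rcases ha with h | ⟨h, _⟩ | ⟨h, _⟩
          · exact h
          · exact absurd h hvx
          · exact absurd h hvy
        have hb' : H.Adj v b := by
          rcases hb with h | ⟨h, _⟩ | ⟨h, _⟩
          · exact h
          · exact absurd h hvx
          · exact absurd h hvy
        exact φ.inj v a b ha' hb' hc

lemma Col.addEdge_c {H H' : SimpleGraph V} {k : ℕ} (φ : Col H k) (x y : V) (α : ℕ)
    (hxy : x ≠ y) (hH' : ∀ u v, H'.Adj u v ↔ H.Adj u v ∨ (u = x ∧ v = y) ∨ (u = y ∧ v = x))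
    (hα : α < k) (hmx : ∀ u, H.Adj x u → φ.c x u ≠ α) (hmy : ∀ u, H.Adj y u → φ.c y u ≠ α)
    (u v : V) :
    (φ.addEdge x y α hxy hH' hα hmx hmy).c u v
      = if (u = x ∧ v = y) ∨ (u = y ∧ v = x) then α else φ.c u v := rfl

/-! ### Kempe chain swaps -/

section Swap

variable {H : SimpleGraph V} {k : ℕ}

/-- Swapping colors `α`, `γ` on a closed set `S`. -/
noncomputable def Col.swap (φ : Col H k) (α γ : ℕ) (hα : α < k) (hγ : γ < k) (S : Set V)
    (hcl : ∀ u v, u ∈ S → H.Adj u v → (φ.c u v = α ∨ φ.c u v = γ) → v ∈ S) :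
    Col H k where
  c := fun u v => if u ∈ S ∨ v ∈ S then sw α γ (φ.c u v) else φ.c u v
  symm := by
    intro u v
    by_cases h : u ∈ S ∨ v ∈ S
    · rw [if_pos h, if_pos (Or.symm h), φ.symm]
    · rw [if_neg h, if_neg (fun h' => h (Or.symm h')), φ.symm]
  lt := by
    intro u v huv
    by_cases h : u ∈ S ∨ v ∈ S
    · rw [if_pos h]
      exact sw_lt hα hγ (φ.lt u v huv)
    · rw [if_neg h]
      exact φ.lt u v huv
  inj := by
    intro v a b ha hb hc
    have key : ∀ w, H.Adj v w →
        (if v ∈ S ∨ w ∈ S then sw α γ (φ.c v w) else φ.c v w)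
          = if v ∈ S then sw α γ (φ.c v w) else φ.c v w := by
      intro w hw
      by_cases hv : v ∈ S
      · rw [if_pos (Or.inl hv), if_pos hv]
      · rw [if_neg hv]
        by_cases hw' : w ∈ S
        · rw [if_pos (Or.inr hw')]
          have hcol : ¬(φ.c w v = α ∨ φ.c w v = γ) := fun h => hv (hcl w v hw' hw.symm h)
          rw [φ.symm w v] at hcol
          push_neg at hcol
          rw [sw_of_ne hcol.1 hcol.2]
        · rw [if_neg (fun h => h.elim hv hw')]
    rw [key a ha, key b hb] at hc
    by_cases hv : v ∈ S
    · rw [if_pos hv, if_pos hv] at hc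
      exact φ.inj v a b ha hb (sw_inj α γ hc)
    · rw [if_neg hv, if_neg hv] at hc
      exact φ.inj v a b ha hb hc

lemma Col.swap_c_adj (φ : Col H k) (α γ : ℕ) (hα : α < k) (hγ : γ < k) (S : Set V)
    (hcl : ∀ u v, u ∈ S → H.Adj u v → (φ.c u v = α ∨ φ.c u v = γ) → v ∈ S)
    {v w : V} (hw : H.Adj v w) :
    (φ.swap α γ hα hγ S hcl).c v w = if v ∈ S then sw α γ (φ.c v w) else φ.c v w := by
  show (if v ∈ S ∨ w ∈ S then sw α γ (φ.c v w) else φ.c v w) = _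
  by_cases hv : v ∈ S
  · rw [if_pos (Or.inl hv), if_pos hv]
  · rw [if_neg hv]
    by_cases hw' : w ∈ S
    · rw [if_pos (Or.inr hw')]
      have hcol : ¬(φ.c w v = α ∨ φ.c w v = γ) := fun h => hv (hcl w v hw' hw.symm h)
      rw [φ.symm w v] at hcol
      push_neg at hcol
      rw [sw_of_ne hcol.1 hcol.2]
    · rw [if_neg (fun h => h.elim hv hw')]

lemma Col.swap_Mis_of_not_mem (φ : Col H k) (α γ : ℕ) (hα : α < k) (hγ : γ < k) (S : Set V)
    (hcl : ∀ u v, u ∈ S → H.Adj u v → (φ.c u v = α ∨ φ.c u v = γ) → v ∈ S)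
    {v : V} (hv : v ∉ S) : (φ.swap α γ hα hγ S hcl).Mis v = φ.Mis v := by
  ext m
  rw [Col.mem_Mis, Col.mem_Mis]
  constructor <;> intro ⟨h1, h2⟩ <;> refine ⟨h1, fun u hu => ?_⟩
  · have := h2 u hu
    rwa [Col.swap_c_adj _ _ _ _ _ _ _ hu, if_neg hv] at this
  · rw [Col.swap_c_adj _ _ _ _ _ _ _ hu, if_neg hv]
    exact h2 u hu

lemma Col.swap_mem_Mis_of_mem (φ : Col H k) (α γ : ℕ) (hα : α < k) (hγ : γ < k) (S : Set V)
    (hcl : ∀ u v, u ∈ S → H.Adj u v → (φ.c u v = α ∨ φ.c u v = γ) → v ∈ S)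
    {v : V} (hv : v ∈ S) {m : ℕ} :
    m ∈ (φ.swap α γ hα hγ S hcl).Mis v ↔ sw α γ m ∈ φ.Mis v := by
  rw [Col.mem_Mis, Col.mem_Mis]
  constructor <;> intro ⟨h1, h2⟩
  · refine ⟨sw_lt hα hγ h1, fun u hu hc => ?_⟩
    have := h2 u hu
    rw [Col.swap_c_adj _ _ _ _ _ _ _ hu, if_pos hv] at this
    exact this (by rw [hc, sw_invol])
  · refine ⟨by rw [← sw_invol α γ m]; exact sw_lt hα hγ h1, fun u hu hc => ?_⟩
    rw [Col.swap_c_adj _ _ _ _ _ _ _ hu, if_pos hv] at hc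
    apply h2 u hu
    rw [← sw_invol α γ (φ.c v u), hc]

end Swap

/-! ### Chain graphs -/

section Chain

variable {H : SimpleGraph V} {k : ℕ}

/-- The subgraph of edges colored `α` or `γ`. -/
def chainG (φ : Col H k) (α γ : ℕ) : SimpleGraph V where
  Adj u v := H.Adj u v ∧ (φ.c u v = α ∨ φ.c u v = γ)
  symm := ⟨by
    intro u v ⟨h1, h2⟩
    rw [φ.symm] at h2
    exact ⟨h1.symm, h2⟩⟩
  loopless := ⟨fun v h => H.loopless.irrefl v h.1⟩

/-- The component of `w` in the chain graph is a closed set. -/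
lemma chain_closed (φ : Col H k) (α γ : ℕ) (w : V) :
    ∀ u v, u ∈ {v | (chainG φ α γ).Reachable w v} → H.Adj u v →
      (φ.c u v = α ∨ φ.c u v = γ) → v ∈ {v | (chainG φ α γ).Reachable w v} := by
  intro u v hu huv hc
  exact hu.trans (SimpleGraph.Adj.reachable ⟨huv, hc⟩)

lemma chain_ndeg_le_two [Fintype V] (φ : Col H k) (α γ : ℕ) (v : V) :
    ndeg (chainG φ α γ) v ≤ 2 := by
  have hsub : (chainG φ α γ).neighborSet v ⊆
      {u | H.Adj v u ∧ φ.c v u = α} ∪ {u | H.Adj v u ∧ φ.c v u = γ} := by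
    rintro u ⟨h1, h2 | h2⟩
    · exact Or.inl ⟨h1, h2⟩
    · exact Or.inr ⟨h1, h2⟩
  have h1 : {u | H.Adj v u ∧ φ.c v u = α}.Subsingleton := by
    rintro a ⟨ha1, ha2⟩ b ⟨hb1, hb2⟩
    exact φ.inj v a b ha1 hb1 (ha2.trans hb2.symm)
  have h2 : {u | H.Adj v u ∧ φ.c v u = γ}.Subsingleton := by
    rintro a ⟨ha1, ha2⟩ b ⟨hb1, hb2⟩
    exact φ.inj v a b ha1 hb1 (ha2.trans hb2.symm)
  calc ndeg (chainG φ α γ) v ≤ ({u | H.Adj v u ∧ φ.c v u = α} ∪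
      {u | H.Adj v u ∧ φ.c v u = γ}).ncard := Set.ncard_le_ncard hsub (Set.toFinite _)
    _ ≤ {u | H.Adj v u ∧ φ.c v u = α}.ncard + {u | H.Adj v u ∧ φ.c v u = γ}.ncard :=
        Set.ncard_union_le _ _
    _ ≤ 1 + 1 := by
        gcongr
        · exact Set.ncard_le_one (Set.toFinite _) |>.mpr h1
        · exact Set.ncard_le_one (Set.toFinite _) |>.mpr h2
    _ = 2 := rfl

lemma chain_ndeg_le_one [Fintype V] (φ : Col H k) (α γ : ℕ) {v : V}
    (hv : α ∈ φ.Mis v ∨ γ ∈ φ.Mis v) : ndeg (chainG φ α γ) v ≤ 1 := by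
  rcases hv with hv | hv <;> rw [Col.mem_Mis] at hv
  · have hsub : (chainG φ α γ).neighborSet v ⊆ {u | H.Adj v u ∧ φ.c v u = γ} := by
      rintro u ⟨h1, h2 | h2⟩
      · exact absurd h2 (hv.2 u h1)
      · exact ⟨h1, h2⟩
    have h2 : {u | H.Adj v u ∧ φ.c v u = γ}.Subsingleton := by
      rintro a ⟨ha1, ha2⟩ b ⟨hb1, hb2⟩
      exact φ.inj v a b ha1 hb1 (ha2.trans hb2.symm)
    calc ndeg (chainG φ α γ) v ≤ {u | H.Adj v u ∧ φ.c v u = γ}.ncard :=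
          Set.ncard_le_ncard hsub (Set.toFinite _)
      _ ≤ 1 := Set.ncard_le_one (Set.toFinite _) |>.mpr h2
  · have hsub : (chainG φ α γ).neighborSet v ⊆ {u | H.Adj v u ∧ φ.c v u = α} := by
      rintro u ⟨h1, h2 | h2⟩
      · exact ⟨h1, h2⟩
      · exact absurd h2 (hv.2 u h1)
    have h2 : {u | H.Adj v u ∧ φ.c v u = α}.Subsingleton := by
      rintro a ⟨ha1, ha2⟩ b ⟨hb1, hb2⟩
      exact φ.inj v a b ha1 hb1 (ha2.trans hb2.symm)
    calc ndeg (chainG φ α γ) v ≤ {u | H.Adj v u ∧ φ.c v u = α}.ncard :=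
          Set.ncard_le_ncard hsub (Set.toFinite _)
      _ ≤ 1 := Set.ncard_le_one (Set.toFinite _) |>.mpr h2

end Chain

/-! ### A connected graph with maximum degree two has at most two vertices of degree one -/

section ThreeLeaves

variable [Fintype V]

set_option linter.unusedSectionVars false

lemma ndeg_eq_card_neighborFinset (H : SimpleGraph V) (v : V) :
    ndeg H v = (H.neighborFinset v).card := by
  rw [ndeg, neighborFinset_def, Set.ncard_eq_toFinset_card']

lemma exists_closer_neighbor (H : SimpleGraph V) {a v : V} (hne : v ≠ a)
    (hr : H.Reachable a v) : ∃ u, H.Adj u v ∧ H.dist a u < H.dist a v := by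
  obtain ⟨p, hp⟩ := hr.exists_walk_length_eq_dist
  have hnil : ¬ p.reverse.Nil := SimpleGraph.Walk.not_nil_of_ne hne
  obtain ⟨u, h, q, hq⟩ := SimpleGraph.Walk.not_nil_iff.mp hnil
  have hlen : q.length + 1 = H.dist a v := by
    have := congrArg SimpleGraph.Walk.length hq
    rw [SimpleGraph.Walk.length_reverse, SimpleGraph.Walk.length_cons] at this
    omega
  refine ⟨u, h.symm, ?_⟩
  have : H.dist a u ≤ q.length := by
    rw [SimpleGraph.dist_comm]
    exact SimpleGraph.dist_le q
  omega

lemma three_leaves (H : SimpleGraph V) (hdeg : ∀ v, ndeg H v ≤ 2)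
    {a b c : V} (hab : H.Reachable a b) (hac : H.Reachable a c)
    (h1 : a ≠ b) (h2 : a ≠ c) (h3 : b ≠ c)
    (da : ndeg H a ≤ 1) (db : ndeg H b ≤ 1) (dc : ndeg H c ≤ 1) : False := by
  classical
  set S : Finset V := Finset.univ.filter (fun v => H.Reachable a v) with hS
  have haS : a ∈ S := by simp only [hS, Finset.mem_filter]; exact ⟨Finset.mem_univ _, SimpleGraph.Reachable.refl a⟩
  have hbS : b ∈ S := by simp [hS, hab]
  have hcS : c ∈ S := by simp [hS, hac]
  have hclose : ∀ v ∈ S.erase a, ∃ u, H.Adj u v ∧ H.dist a u < H.dist a v := by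
    intro v hv
    rw [Finset.mem_erase] at hv
    refine exists_closer_neighbor H hv.1 ?_
    have := hv.2
    rw [hS, Finset.mem_filter] at this
    exact this.2
  choose! F hF1 hF2 using hclose
  have hFS : ∀ v ∈ S.erase a, F v ∈ S := by
    intro v hv
    rw [hS, Finset.mem_filter]
    have hv' := hv
    rw [Finset.mem_erase, hS, Finset.mem_filter] at hv'
    exact ⟨Finset.mem_univ _, hv'.2.2.trans (SimpleGraph.Adj.reachable (hF1 v hv).symm)⟩
  set T1 : Finset (V × V) := (S.erase a).image (fun v => (F v, v)) with hT1
  set T2 : Finset (V × V) := (S.erase a).image (fun v => (v, F v)) with hT2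
  set D : Finset (V × V) := Finset.univ.filter (fun p : V × V => p.1 ∈ S ∧ H.Adj p.1 p.2)
    with hD
  have hT1D : T1 ⊆ D := by
    intro p hp
    rw [hT1, Finset.mem_image] at hp
    obtain ⟨v, hv, rfl⟩ := hp
    rw [hD, Finset.mem_filter]
    exact ⟨Finset.mem_univ _, hFS v hv, hF1 v hv⟩
  have hT2D : T2 ⊆ D := by
    intro p hp
    rw [hT2, Finset.mem_image] at hp
    obtain ⟨v, hv, rfl⟩ := hp
    rw [hD, Finset.mem_filter]
    refine ⟨Finset.mem_univ _, ?_, (hF1 v hv).symm⟩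
    have := Finset.mem_of_mem_erase hv
    exact this
  have hdisj : Disjoint T1 T2 := by
    rw [Finset.disjoint_left]
    intro p hp1 hp2
    rw [hT1, Finset.mem_image] at hp1
    rw [hT2, Finset.mem_image] at hp2
    obtain ⟨v, hv, hveq⟩ := hp1
    obtain ⟨w, hw, hweq⟩ := hp2
    have e1 : F v = w := by rw [← hweq] at hveq; exact (Prod.mk.injEq _ _ _ _).mp hveq |>.1
    have e2 : v = F w := by rw [← hweq] at hveq; exact (Prod.mk.injEq _ _ _ _).mp hveq |>.2
    have g1 := hF2 v hv
    have g2 := hF2 w hw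
    rw [e1] at g1
    rw [← e2] at g2
    omega
  have hcardT1 : T1.card = (S.erase a).card := by
    rw [hT1]
    apply Finset.card_image_of_injOn
    intro u _ v _ huv
    exact ((Prod.mk.injEq _ _ _ _).mp huv).2
  have hcardT2 : T2.card = (S.erase a).card := by
    rw [hT2]
    apply Finset.card_image_of_injOn
    intro u _ v _ huv
    exact ((Prod.mk.injEq _ _ _ _).mp huv).1
  have hDcard : D.card = ∑ v ∈ S, ndeg H v := by
    have hDeq : D = S.biUnion (fun u => (H.neighborFinset u).image (fun w => (u, w))) := by
      ext ⟨p1, p2⟩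
      rw [hD, Finset.mem_filter, Finset.mem_biUnion]
      simp only [Finset.mem_univ, true_and, Finset.mem_image, SimpleGraph.mem_neighborFinset]
      constructor
      · rintro ⟨h1', h2'⟩
        exact ⟨p1, h1', p2, h2', rfl⟩
      · rintro ⟨u, hu, w, hw, heq⟩
        obtain ⟨rfl, rfl⟩ := (Prod.mk.injEq _ _ _ _).mp heq
        exact ⟨hu, hw⟩
    rw [hDeq, Finset.card_biUnion]
    · apply Finset.sum_congr rfl
      intro u _
      rw [Finset.card_image_of_injOn (fun x _ y _ h => ((Prod.mk.injEq _ _ _ _).mp h).2),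
        ndeg_eq_card_neighborFinset]
    · intro u _ v _ huv
      simp only [Function.onFun]
      rw [Finset.disjoint_left]
      intro p hp1 hp2
      rw [Finset.mem_image] at hp1 hp2
      obtain ⟨w1, _, heq1⟩ := hp1
      obtain ⟨w2, _, heq2⟩ := hp2
      exact huv ((Prod.mk.injEq _ _ _ _).mp (heq1.trans heq2.symm)).1
  have habc : ({a, b, c} : Finset V) ⊆ S := by
    intro v hv
    rw [Finset.mem_insert, Finset.mem_insert, Finset.mem_singleton] at hv
    rcases hv with rfl | rfl | rfl
    · exact haS
    · exact hbS
    · exact hcS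
  have habc_card : ({a, b, c} : Finset V).card = 3 := by
    rw [Finset.card_insert_of_notMem (by simp [h1, h2]),
      Finset.card_insert_of_notMem (by simp [h3]), Finset.card_singleton]
  have hsum_le : ∑ v ∈ S, ndeg H v ≤ 2 * S.card - 3 := by
    have hsplit : ∑ v ∈ S \ ({a, b, c} : Finset V), ndeg H v + ∑ v ∈ ({a, b, c} : Finset V), ndeg H v = ∑ v ∈ S, ndeg H v := Finset.sum_sdiff habc
    have h_abc : ∑ v ∈ ({a, b, c} : Finset V), ndeg H v ≤ 3 := by
      calc ∑ v ∈ ({a, b, c} : Finset V), ndeg H v ≤ ∑ _v ∈ ({a, b, c} : Finset V), 1 := by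
            apply Finset.sum_le_sum
            intro v hv
            rw [Finset.mem_insert, Finset.mem_insert, Finset.mem_singleton] at hv
            rcases hv with rfl | rfl | rfl
            · exact da
            · exact db
            · exact dc
        _ = 3 := by rw [Finset.sum_const, habc_card, smul_eq_mul, mul_one]
    have h_rest : ∑ v ∈ S \ ({a, b, c} : Finset V), ndeg H v ≤ 2 * (S.card - 3) := by
      calc ∑ v ∈ S \ ({a, b, c} : Finset V), ndeg H v
          ≤ ∑ _v ∈ S \ ({a, b, c} : Finset V), 2 :=
            Finset.sum_le_sum (fun v _ => hdeg v)
        _ = 2 * (S.card - 3) := by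
            rw [Finset.sum_const, smul_eq_mul, Finset.card_sdiff_of_subset habc, habc_card, mul_comm]
    have hcard3 : 3 ≤ S.card := habc_card ▸ Finset.card_le_card habc
    omega
  have hunion : (T1 ∪ T2).card ≤ D.card :=
    Finset.card_le_card (Finset.union_subset hT1D hT2D)
  rw [Finset.card_union_of_disjoint hdisj, hcardT1, hcardT2] at hunion
  have herase : (S.erase a).card = S.card - 1 := Finset.card_erase_of_mem haS
  have hcard3 : 3 ≤ S.card := habc_card ▸ Finset.card_le_card habc
  omega

end ThreeLeaves

/-! ### Multifans and Vizing's adjacency lemma -/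

def Col.restrict {H : SimpleGraph V} {k : ℕ} (φ : Col H k) (H'' : SimpleGraph V)
    (h : H'' ≤ H) : Col H'' k :=
  ⟨φ.c, φ.symm, fun u v huv => φ.lt u v (h huv), fun v a b ha hb => φ.inj v a b (h ha) (h hb)⟩

lemma adj_deleteEdge_iff (H : SimpleGraph V) {x y : V} (hxy : H.Adj x y) (u v : V) :
    H.Adj u v ↔ (H.deleteEdges {s(x, y)}).Adj u v ∨ (u = x ∧ v = y) ∨ (u = y ∧ v = x) := by
  rw [SimpleGraph.deleteEdges_adj, Set.mem_singleton_iff, Sym2.eq_iff]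
  constructor
  · intro h
    by_cases hc : u = x ∧ v = y ∨ u = y ∧ v = x
    · exact Or.inr hc
    · exact Or.inl ⟨h, hc⟩
  · rintro (⟨h, _⟩ | ⟨rfl, rfl⟩ | ⟨rfl, rfl⟩)
    · exact h
    · exact hxy
    · exact hxy.symm

section Fan

variable [Fintype V] {G : SimpleGraph V} {Δ : ℕ} {x y : V}

set_option linter.unusedSectionVars false

/-- A multifan at `x` with respect to the deleted edge `xy`. -/
def IsFan (G : SimpleGraph V) (Δ : ℕ) (x y : V)
    (φ : Col (G.deleteEdges {s(x, y)}) Δ) (F : ℕ → V) (p : ℕ) : Prop :=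
  0 < p ∧ F 0 = y ∧ (∀ i < p, G.Adj x (F i)) ∧
    (∀ i < p, ∀ j < p, F i = F j → i = j) ∧
    (∀ i, 0 < i → i < p → ∃ j < i, φ.c x (F i) ∈ φ.Mis (F j))

lemma fan_adj' {φ : Col (G.deleteEdges {s(x, y)}) Δ} {F : ℕ → V} {p : ℕ}
    (hF : IsFan G Δ x y φ F p) {i : ℕ} (hi0 : 0 < i) (hip : i < p) :
    (G.deleteEdges {s(x, y)}).Adj x (F i) := by
  obtain ⟨hp, hF0, hadj, hinj, _⟩ := hF
  rw [SimpleGraph.deleteEdges_adj, Set.mem_singleton_iff, Sym2.eq_iff]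
  refine ⟨hadj i hip, ?_⟩
  have hxy : x ≠ y := by
    have h0 := hadj 0 hp
    rw [hF0] at h0
    exact G.ne_of_adj h0
  rintro (⟨-, h2⟩ | ⟨h1, -⟩)
  · exact absurd (hinj i hip 0 hp (h2.trans hF0.symm)) (by omega)
  · exact hxy h1

lemma claimA (hxyG : G.Adj x y) (hnoc : ∀ _ψ : Col G Δ, False) :
    ∀ i (φ : Col (G.deleteEdges {s(x, y)}) Δ) (F : ℕ → V) (p : ℕ),
      IsFan G Δ x y φ F p → i < p → ∀ α, α ∈ φ.Mis x → α ∈ φ.Mis (F i) → False := by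
  have hxy : x ≠ y := G.ne_of_adj hxyG
  intro i
  induction i using Nat.strong_induction_on with
  | _ i IH =>
    intro φ F p hF hip α hαx hαF
    rcases Nat.eq_zero_or_pos i with rfl | hi0
    · -- color the edge xy with α
      rw [hF.2.1] at hαF
      rw [Col.mem_Mis] at hαx hαF
      exact hnoc (φ.addEdge x y α hxy (adj_deleteEdge_iff G hxyG) hαx.1
        (fun u hu => hαx.2 u hu) (fun u hu => hαF.2 u hu))
    · -- recolor the edge x (F i) with α and use the justification index
      obtain ⟨j, hji, hβ⟩ := hF.2.2.2.2 i hi0 hip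
      set β := φ.c x (F i) with hβdef
      have hadj' : (G.deleteEdges {s(x, y)}).Adj x (F i) := fan_adj' hF hi0 hip
      have hβlt : β < Δ := φ.lt x (F i) hadj'
      have hαβ : α ≠ β := fun h => ((Col.mem_Mis φ).mp hαx).2 (F i) hadj' (h.trans hβdef).symm
      have hxFi : x ≠ F i := G.ne_of_adj (hF.2.2.1 i hip)
      -- the restricted coloring
      have hle : ((G.deleteEdges {s(x, y)}).deleteEdges {s(x, F i)}) ≤ G.deleteEdges {s(x, y)} :=
        SimpleGraph.deleteEdges_le _
      set φr := φ.restrict _ hle with hφr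
      have hmx' : ∀ u, ((G.deleteEdges {s(x, y)}).deleteEdges {s(x, F i)}).Adj x u →
          φr.c x u ≠ α := fun u hu => ((Col.mem_Mis φ).mp hαx).2 u (hle hu)
      have hmy' : ∀ u, ((G.deleteEdges {s(x, y)}).deleteEdges {s(x, F i)}).Adj (F i) u →
          φr.c (F i) u ≠ α := fun u hu => ((Col.mem_Mis φ).mp hαF).2 u (hle hu)
      set φ' := φr.addEdge x (F i) α hxFi
        (adj_deleteEdge_iff (G.deleteEdges {s(x, y)}) hadj') ((Col.mem_Mis φ).mp hαx).1
        hmx' hmy' with hφ'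
      have hc' : ∀ u v, φ'.c u v = if (u = x ∧ v = F i) ∨ (u = F i ∧ v = x) then α
          else φ.c u v := fun u v => rfl
      -- missing sets away from x and F i are unchanged
      have hMis : ∀ v, v ≠ x → v ≠ F i → φ'.Mis v = φ.Mis v := by
        intro v hvx hvFi
        ext m
        rw [Col.mem_Mis, Col.mem_Mis]
        have : ∀ u, φ'.c v u = φ.c v u := by
          intro u
          rw [hc', if_neg]
          rintro (⟨h, -⟩ | ⟨h, -⟩)
          · exact hvx h
          · exact hvFi h
        constructor <;> intro ⟨h1, h2⟩ <;> exact ⟨h1, fun u hu => by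
          first
            | (rw [← this u]; exact h2 u hu)
            | (rw [this u]; exact h2 u hu)⟩
      -- β is now missing at x
      have hβx : β ∈ φ'.Mis x := by
        rw [Col.mem_Mis]
        refine ⟨hβlt, fun u hu => ?_⟩
        by_cases hui : u = F i
        · rw [hc', if_pos (Or.inl ⟨rfl, hui⟩)]
          exact fun h => hαβ h
        · rw [hc', if_neg (by rintro (⟨-, h⟩ | ⟨h, -⟩); exacts [hui h, hxFi h])]
          intro h
          exact hui (φ.inj x u (F i) hu hadj' (h.trans hβdef))
      -- β is still missing at F j
      have hFjx : F j ≠ x := fun h => (G.ne_of_adj (hF.2.2.1 j (by omega))) h.symm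
      have hFjFi : F j ≠ F i := fun h =>
        absurd (hF.2.2.2.1 j (by omega) i hip h) (by omega)
      have hβFj : β ∈ φ'.Mis (F j) := by
        rw [hMis _ hFjx hFjFi]
        exact hβ
      -- the truncated fan is still a fan
      have hF' : IsFan G Δ x y φ' F (j + 1) := by
        obtain ⟨hp, hF0, hadj, hinj, hfan⟩ := hF
        refine ⟨by omega, hF0, fun t ht => hadj t (by omega),
          fun s hs t ht h => hinj s (by omega) t (by omega) h, ?_⟩
        intro t ht0 htj
        obtain ⟨s, hst, hs⟩ := hfan t ht0 (by omega)
        have hFtFi : F t ≠ F i := fun h => absurd (hinj t (by omega) i hip h) (by omega)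
        have hFsx : F s ≠ x := fun h => (G.ne_of_adj (hadj s (by omega))) h.symm
        have hFsFi : F s ≠ F i := fun h => absurd (hinj s (by omega) i hip h) (by omega)
        refine ⟨s, hst, ?_⟩
        have hct : φ'.c x (F t) = φ.c x (F t) := by
          rw [hc', if_neg]
          rintro (⟨-, h⟩ | ⟨h, -⟩)
          · exact hFtFi h
          · exact hxFi h
        rw [hct, hMis _ hFsx hFsFi]
        exact hs
      exact IH j hji φ' F (j + 1) hF' (by omega) β hβx hβFj

end Fan

section FanB

variable [Fintype V] {G : SimpleGraph V} {Δ : ℕ} {x y : V}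

set_option linter.unusedSectionVars false

lemma swapContra (hxyG : G.Adj x y) (hnoc : ∀ _ψ : Col G Δ, False)
    (φ : Col (G.deleteEdges {s(x, y)}) Δ) (F : ℕ → V) (p : ℕ) (hF : IsFan G Δ x y φ F p)
    (α γ : ℕ) (hαlt : α < Δ) (hγx : γ ∈ φ.Mis x) {kk : ℕ} (hkp : kk < p)
    (hαk : α ∈ φ.Mis (F kk))
    (hxS : ¬ (chainG φ α γ).Reachable (F kk) x)
    (hyp : ∀ t, 0 < t → t ≤ kk → φ.c x (F t) = α →
      ∃ s < t, α ∈ φ.Mis (F s) ∧ ¬ (chainG φ α γ).Reachable (F kk) (F s)) : False := by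
  have hγlt : γ < Δ := ((Col.mem_Mis φ).mp hγx).1
  set S : Set V := {v | (chainG φ α γ).Reachable (F kk) v} with hS
  have hcl := chain_closed φ α γ (F kk)
  set φ' := φ.swap α γ hαlt hγlt S hcl with hφ'
  have hxnS : x ∉ S := hxS
  have hMx : φ'.Mis x = φ.Mis x := φ.swap_Mis_of_not_mem α γ hαlt hγlt S hcl hxnS
  have hkS : F kk ∈ S := SimpleGraph.Reachable.refl _
  have hγk : γ ∈ φ'.Mis (F kk) := by
    rw [φ.swap_mem_Mis_of_mem α γ hαlt hγlt S hcl hkS, sw_right]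
    exact hαk
  have hcx : ∀ u, (G.deleteEdges {s(x, y)}).Adj x u → φ'.c x u = φ.c x u := by
    intro u hu
    rw [φ.swap_c_adj α γ hαlt hγlt S hcl hu, if_neg hxnS]
  have hF' : IsFan G Δ x y φ' F (kk + 1) := by
    obtain ⟨hp, hF0, hadj, hinj, hfan⟩ := hF
    refine ⟨by omega, hF0, fun t ht => hadj t (by omega),
      fun s hs t ht h => hinj s (by omega) t (by omega) h, ?_⟩
    intro t ht0 htk
    have hadjt : (G.deleteEdges {s(x, y)}).Adj x (F t) :=
      fan_adj' ⟨hp, hF0, hadj, hinj, hfan⟩ ht0 (by omega)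
    rw [hcx (F t) hadjt]
    by_cases hβα : φ.c x (F t) = α
    · obtain ⟨s, hst, hαs, hsnS⟩ := hyp t ht0 (by omega) hβα
      refine ⟨s, hst, ?_⟩
      rw [φ.swap_Mis_of_not_mem α γ hαlt hγlt S hcl hsnS]
      exact hβα ▸ hαs
    · have hβγ : φ.c x (F t) ≠ γ := ((Col.mem_Mis φ).mp hγx).2 (F t) hadjt
      obtain ⟨s, hst, hs⟩ := hfan t ht0 (by omega)
      refine ⟨s, hst, ?_⟩
      by_cases hsS : F s ∈ S
      · rw [φ.swap_mem_Mis_of_mem α γ hαlt hγlt S hcl hsS, sw_of_ne hβα hβγ]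
        exact hs
      · rw [φ.swap_Mis_of_not_mem α γ hαlt hγlt S hcl hsS]
        exact hs
  exact claimA hxyG hnoc kk φ' F (kk + 1) hF' (by omega) γ (hMx ▸ hγx) hγk

lemma claimB (hxyG : G.Adj x y) (hnoc : ∀ _ψ : Col G Δ, False) (hdegx : ndeg G x ≤ Δ)
    (φ : Col (G.deleteEdges {s(x, y)}) Δ) (F : ℕ → V) (p : ℕ) (hF : IsFan G Δ x y φ F p) :
    ∀ i j, i < j → j < p → ∀ α, α ∈ φ.Mis (F i) → α ∈ φ.Mis (F j) → False := by
  intro i j hij hjp α hαi hαj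
  have hxy : x ≠ y := G.ne_of_adj hxyG
  -- a color missing at x
  have hdegx' : ndeg (G.deleteEdges {s(x, y)}) x < Δ := by
    have hns : (G.deleteEdges {s(x, y)}).neighborSet x = G.neighborSet x \ {y} := by
      ext u
      constructor
      · intro hu
        have h1 : G.Adj x u ∧ s(x, u) ∉ ({s(x, y)} : Set (Sym2 V)) :=
          SimpleGraph.deleteEdges_adj.mp hu
        refine ⟨h1.1, fun h => h1.2 ?_⟩
        rw [Set.mem_singleton_iff] at h ⊢
        rw [Sym2.eq_iff]
        exact Or.inl ⟨rfl, h⟩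
      · rintro ⟨h1, h2⟩
        refine SimpleGraph.deleteEdges_adj.mpr ⟨h1, fun h => ?_⟩
        rw [Set.mem_singleton_iff, Sym2.eq_iff] at h
        rcases h with ⟨-, h⟩ | ⟨h, -⟩
        · exact h2 h
        · exact hxy h
    have hymem : y ∈ G.neighborSet x := hxyG
    have : ndeg (G.deleteEdges {s(x, y)}) x = ndeg G x - 1 := by
      rw [ndeg, ndeg, hns, Set.ncard_diff_singleton_of_mem hymem]
    have hpos : 0 < ndeg G x := by
      rw [ndeg, Set.ncard_pos (Set.toFinite _)]
      exact ⟨y, hymem⟩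
    omega
  obtain ⟨γ, hγx⟩ := φ.Mis_nonempty hdegx'
  have hγno : ∀ s, s < p → γ ∉ φ.Mis (F s) := fun s hsp hγs =>
    claimA hxyG hnoc s φ F p hF hsp γ hγx hγs
  have hαx : α ∉ φ.Mis x := fun h => claimA hxyG hnoc i φ F p hF (by omega) α h hαi
  have hαlt : α < Δ := ((Col.mem_Mis φ).mp hαi).1
  have hαγ : α ≠ γ := fun h => hγno i (by omega) (h ▸ hαi)
  -- the minimal index where α is missing
  have hex : ∃ s, α ∈ φ.Mis (F s) := ⟨i, hαi⟩
  classical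
  set i₀ := Nat.find hex with hi₀def
  have hi₀ : α ∈ φ.Mis (F i₀) := Nat.find_spec hex
  have hi₀min : ∀ s, s < i₀ → α ∉ φ.Mis (F s) := fun s hs => Nat.find_min hex hs
  have hi₀i : i₀ ≤ i := Nat.find_min' hex hαi
  have keyα : ∀ t, 0 < t → t < p → φ.c x (F t) = α → i₀ < t := by
    intro t ht0 htp hβ
    obtain ⟨s, hst, hs⟩ := hF.2.2.2.2 t ht0 htp
    rw [hβ] at hs
    by_contra h
    push_neg at h
    exact hi₀min s (by omega) hs
  -- chain graph degrees
  have hdeg2 : ∀ v, ndeg (chainG φ α γ) v ≤ 2 := chain_ndeg_le_two φ α γ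
  have hdx1 : ndeg (chainG φ α γ) x ≤ 1 := chain_ndeg_le_one φ α γ (Or.inr hγx)
  have hdi1 : ndeg (chainG φ α γ) (F i₀) ≤ 1 := chain_ndeg_le_one φ α γ (Or.inl hi₀)
  have hdj1 : ndeg (chainG φ α γ) (F j) ≤ 1 := chain_ndeg_le_one φ α γ (Or.inl hαj)
  have hxFi : x ≠ F i₀ := G.ne_of_adj (hF.2.2.1 i₀ (by omega))
  have hxFj : x ≠ F j := G.ne_of_adj (hF.2.2.1 j hjp)
  have hFij : F i₀ ≠ F j := fun h => absurd (hF.2.2.2.1 i₀ (by omega) j hjp h) (by omega)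
  by_cases hxi : (chainG φ α γ).Reachable (F i₀) x
  · have hxj : ¬ (chainG φ α γ).Reachable (F j) x := by
      intro h
      exact three_leaves (chainG φ α γ) hdeg2 hxi.symm h.symm hxFi hxFj hFij hdx1 hdi1 hdj1
    have hji₀ : ¬ (chainG φ α γ).Reachable (F j) (F i₀) := by
      intro h
      exact three_leaves (chainG φ α γ) hdeg2 hxi.symm (hxi.symm.trans h.symm) hxFi hxFj hFij
        hdx1 hdi1 hdj1
    exact swapContra hxyG hnoc φ F p hF α γ hαlt hγx hjp hαj hxj
      (fun t ht0 htj hβ => ⟨i₀, keyα t ht0 (by omega) hβ, hi₀, hji₀⟩)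
  · exact swapContra hxyG hnoc φ F p hF α γ hαlt hγx (show i₀ < p by omega) hi₀ hxi
      (fun t ht0 hti₀ hβ => absurd (keyα t ht0 (by omega) hβ) (by omega))

end FanB

section VAL

variable [Fintype V] {G : SimpleGraph V} {Δ : ℕ} {x y : V}

set_option linter.unusedSectionVars false

lemma nbhd_del_x (hxy : x ≠ y) :
    (G.deleteEdges {s(x, y)}).neighborSet x = G.neighborSet x \ {y} := by
  ext u
  constructor
  · intro hu
    have h1 := SimpleGraph.deleteEdges_adj.mp hu
    refine ⟨h1.1, fun h => h1.2 ?_⟩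
    rw [Set.mem_singleton_iff] at h ⊢
    rw [Sym2.eq_iff]
    exact Or.inl ⟨rfl, h⟩
  · rintro ⟨h1, h2⟩
    refine SimpleGraph.deleteEdges_adj.mpr ⟨h1, fun h => ?_⟩
    rw [Set.mem_singleton_iff, Sym2.eq_iff] at h
    rcases h with ⟨-, h⟩ | ⟨h, -⟩
    · exact h2 h
    · exact hxy h

lemma nbhd_del_y (hxy : x ≠ y) :
    (G.deleteEdges {s(x, y)}).neighborSet y = G.neighborSet y \ {x} := by
  ext u
  constructor
  · intro hu
    have h1 := SimpleGraph.deleteEdges_adj.mp hu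
    refine ⟨h1.1, fun h => h1.2 ?_⟩
    rw [Set.mem_singleton_iff] at h ⊢
    rw [Sym2.eq_iff]
    exact Or.inr ⟨rfl, h⟩
  · rintro ⟨h1, h2⟩
    refine SimpleGraph.deleteEdges_adj.mpr ⟨h1, fun h => ?_⟩
    rw [Set.mem_singleton_iff, Sym2.eq_iff] at h
    rcases h with ⟨h, -⟩ | ⟨-, h⟩
    · exact hxy h.symm
    · exact h2 h

lemma nbhd_del_other {v : V} (hvx : v ≠ x) (hvy : v ≠ y) :
    (G.deleteEdges {s(x, y)}).neighborSet v = G.neighborSet v := by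
  ext u
  constructor
  · intro hu
    exact (SimpleGraph.deleteEdges_adj.mp hu).1
  · intro hu
    refine SimpleGraph.deleteEdges_adj.mpr ⟨hu, fun h => ?_⟩
    rw [Set.mem_singleton_iff, Sym2.eq_iff] at h
    rcases h with ⟨h, -⟩ | ⟨h, -⟩
    · exact hvx h
    · exact hvy h

/-- Vizing's adjacency lemma. -/
lemma vizing_adjacency (hadj : G.Adj x y) (hchromG : chromIdx G = Δ + 1)
    (hchromE : chromIdx (G.deleteEdges {s(x, y)}) = Δ) (hdeg : ∀ v, ndeg G v ≤ Δ) :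
    Δ + 1 ≤ ndeg G y + {z : V | z ≠ y ∧ G.Adj x z ∧ ndeg G z = Δ}.ncard := by
  classical
  have hxy : x ≠ y := G.ne_of_adj hadj
  have hnoc : ∀ _ψ : Col G Δ, False := fun ψ =>
    not_hasEdgeColoring_of_lt (by omega) (hasEdgeColoring_of_col ψ)
  obtain ⟨φ⟩ := col_of_hasEdgeColoring
    (hchromE ▸ hasEdgeColoring_chromIdx (G.deleteEdges {s(x, y)}))
  -- a maximal fan
  set N := Fintype.card V with hN
  have hfan1 : IsFan G Δ x y φ (fun _ => y) 1 := by
    refine ⟨by omega, rfl, fun i _ => hadj, fun i hi j hj _ => by omega, ?_⟩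
    intro i hi0 hi1
    omega
  have hbound : ∀ q (F : ℕ → V), IsFan G Δ x y φ F q → q ≤ N := by
    intro q F hF
    have : Function.Injective (fun t : Fin q => F t) := by
      intro a b hab
      exact Fin.ext (hF.2.2.2.1 a a.2 b b.2 hab)
    calc q = Fintype.card (Fin q) := (Fintype.card_fin q).symm
      _ ≤ N := Fintype.card_le_of_injective _ this
  set P : ℕ → Prop := fun q => ∃ F, IsFan G Δ x y φ F q with hP
  have hP1 : P 1 := ⟨_, hfan1⟩
  have h1N : 1 ≤ N := by
    have := hbound 1 _ hfan1
    omega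
  set p := Nat.findGreatest P N with hp
  have hPp : P p := Nat.findGreatest_spec h1N hP1
  obtain ⟨F, hF⟩ := hPp
  have hp1 : 1 ≤ p := Nat.le_findGreatest h1N hP1
  have hmax : ¬ P (p + 1) := by
    intro hq
    obtain ⟨F', hF'⟩ := id hq
    have hlt : Nat.findGreatest P N < p + 1 := by rw [← hp]; omega
    exact Nat.findGreatest_is_greatest hlt (hbound (p + 1) F' hF') hq
  -- every color missing at a fan vertex appears on a fan edge
  have hcover : ∀ α t, t < p → α ∈ φ.Mis (F t) → ∃ s, 1 ≤ s ∧ s < p ∧ φ.c x (F s) = α := by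
    intro α t htp hαt
    have hαlt : α < Δ := ((Col.mem_Mis φ).mp hαt).1
    have hαx : α ∉ φ.Mis x := fun h => claimA (G := G) hadj hnoc t φ F p hF htp α h hαt
    obtain ⟨z, hz, hcz⟩ := φ.exists_of_not_mem_Mis hαlt hαx
    by_cases hzF : ∃ s, s < p ∧ F s = z
    · obtain ⟨s, hsp, rfl⟩ := hzF
      have hs1 : 1 ≤ s := by
        rcases Nat.eq_zero_or_pos s with rfl | h
        · exfalso
          rw [hF.2.1] at hz
          exact (SimpleGraph.deleteEdges_adj.mp hz).2 rfl
        · omega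
      exact ⟨s, hs1, hsp, hcz⟩
    · exfalso
      push_neg at hzF
      apply hmax
      refine ⟨fun n => if n = p then z else F n, by omega, ?_, ?_, ?_, ?_⟩
      · dsimp only
        rw [if_neg (by omega)]
        exact hF.2.1
      · intro i hi
        dsimp only
        by_cases h : i = p
        · rw [if_pos h]
          exact (SimpleGraph.deleteEdges_le (s := {s(x, y)})) hz
        · rw [if_neg h]
          exact hF.2.2.1 i (by omega)
      · intro i hi j hj hij
        dsimp only at hij
        by_cases h1 : i = p <;> by_cases h2 : j = p
        · omega
        · rw [if_pos h1, if_neg h2] at hij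
          exact absurd hij.symm (hzF j (by omega))
        · rw [if_neg h1, if_pos h2] at hij
          exact absurd hij (hzF i (by omega))
        · rw [if_neg h1, if_neg h2] at hij
          exact hF.2.2.2.1 i (by omega) j (by omega) hij
      · intro i hi0 hip
        dsimp only
        by_cases h : i = p
        · subst h
          rw [if_pos rfl]
          refine ⟨t, htp, ?_⟩
          rw [if_neg (by omega), hcz]
          exact hαt
        · rw [if_neg h]
          obtain ⟨s, hst, hs⟩ := hF.2.2.2.2 i hi0 (by omega)
          refine ⟨s, hst, ?_⟩
          rw [if_neg (by omega)]
          exact hs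
  -- the union of missing sets
  set U : Finset ℕ := (Finset.range p).biUnion (fun t => φ.Mis (F t)) with hU
  have hUcard : U.card = ∑ t ∈ Finset.range p, (φ.Mis (F t)).card := by
    rw [hU]
    apply Finset.card_biUnion
    intro i hi j hj hij
    simp only [Function.onFun]
    rw [Finset.disjoint_left]
    intro α hαi hαj
    rw [Finset.coe_range, Set.mem_Iio] at hi hj
    rcases Nat.lt_or_ge i j with h | h
    · exact claimB hadj hnoc (hdeg x) φ F p hF i j h hj α hαi hαj
    · exact claimB hadj hnoc (hdeg x) φ F p hF j i (by omega) hi α hαj hαi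
  have hUsub : U ⊆ (Finset.Ico 1 p).image (fun s => φ.c x (F s)) := by
    intro α hα
    rw [hU, Finset.mem_biUnion] at hα
    obtain ⟨t, ht, hαt⟩ := hα
    rw [Finset.mem_range] at ht
    obtain ⟨s, hs1, hsp, hcs⟩ := hcover α t ht hαt
    rw [Finset.mem_image]
    exact ⟨s, Finset.mem_Ico.mpr ⟨hs1, hsp⟩, hcs⟩
  have hUle : U.card ≤ p - 1 := by
    calc U.card ≤ ((Finset.Ico 1 p).image (fun s => φ.c x (F s))).card :=
          Finset.card_le_card hUsub
      _ ≤ (Finset.Ico 1 p).card := Finset.card_image_le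
      _ = p - 1 := Nat.card_Ico 1 p
  -- degrees of fan vertices
  have hd0 : (φ.Mis (F 0)).card + ndeg G y = Δ + 1 := by
    have h1 : ndeg (G.deleteEdges {s(x, y)}) y + 1 = ndeg G y := by
      have hns := nbhd_del_y (G := G) hxy
      have hxmem : x ∈ G.neighborSet y := hadj.symm
      rw [ndeg, ndeg, hns, Set.ncard_diff_singleton_of_mem hxmem]
      have hpos : 0 < (G.neighborSet y).ncard := by
        rw [Set.ncard_pos (Set.toFinite _)]
        exact ⟨x, hxmem⟩
      omega
    have h2 := φ.card_Mis y
    have h3 := φ.ndeg_le y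
    rw [hF.2.1]
    omega
  have hdt : ∀ t, 1 ≤ t → t < p → (φ.Mis (F t)).card + ndeg G (F t) = Δ := by
    intro t ht1 htp
    have hFtx : F t ≠ x := fun h => (G.ne_of_adj (hF.2.2.1 t htp)) h.symm
    have hFty : F t ≠ y := by
      intro h
      have := hF.2.2.2.1 t htp 0 (by omega) (h.trans hF.2.1.symm)
      omega
    have hns := nbhd_del_other (G := G) hFtx hFty
    have h1 : ndeg (G.deleteEdges {s(x, y)}) (F t) = ndeg G (F t) := by
      rw [ndeg, ndeg, hns]
    have h2 := φ.card_Mis (F t)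
    have h3 := φ.ndeg_le (F t)
    omega
  -- small and major fan vertices
  set minor : Finset ℕ := (Finset.Ico 1 p).filter (fun t => ndeg G (F t) < Δ) with hminor
  set major : Finset ℕ := (Finset.Ico 1 p).filter (fun t => ¬ ndeg G (F t) < Δ) with hmajor
  have hsplitcard : minor.card + major.card = p - 1 := by
    rw [hminor, hmajor, Finset.card_filter_add_card_filter_not, Nat.card_Ico]
  have hrange : Finset.range p = insert 0 (Finset.Ico 1 p) := by
    ext t
    simp only [Finset.mem_range, Finset.mem_insert, Finset.mem_Ico]
    omega
  have hsum_split : ∑ t ∈ Finset.range p, (φ.Mis (F t)).card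
      = (φ.Mis (F 0)).card + ∑ t ∈ Finset.Ico 1 p, (φ.Mis (F t)).card := by
    rw [hrange, Finset.sum_insert (by simp)]
  have hminor_le : minor.card ≤ ∑ t ∈ Finset.Ico 1 p, (φ.Mis (F t)).card := by
    calc minor.card = ∑ _t ∈ minor, 1 := by rw [Finset.sum_const, smul_eq_mul, mul_one]
      _ ≤ ∑ t ∈ minor, (φ.Mis (F t)).card := by
          apply Finset.sum_le_sum
          intro t ht
          rw [hminor, Finset.mem_filter, Finset.mem_Ico] at ht
          have := hdt t ht.1.1 ht.1.2
          omega
      _ ≤ ∑ t ∈ Finset.Ico 1 p, (φ.Mis (F t)).card :=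
          Finset.sum_le_sum_of_subset (Finset.filter_subset _ _)
  -- major fan vertices give major neighbors of x
  have hmajor_le : major.card ≤ {z : V | z ≠ y ∧ G.Adj x z ∧ ndeg G z = Δ}.ncard := by
    have himg : ↑(major.image F) ⊆ {z : V | z ≠ y ∧ G.Adj x z ∧ ndeg G z = Δ} := by
      intro z hz
      rw [Finset.coe_image, Set.mem_image] at hz
      obtain ⟨t, ht, rfl⟩ := hz
      rw [hmajor, Finset.mem_coe, Finset.mem_filter, Finset.mem_Ico] at ht
      have hFty : F t ≠ y := by
        intro h
        have := hF.2.2.2.1 t ht.1.2 0 (by omega) (h.trans hF.2.1.symm)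
        omega
      exact ⟨hFty, hF.2.2.1 t ht.1.2, by have := hdeg (F t); omega⟩
    have hinj : Set.InjOn F ↑major := by
      intro a ha b hb hab
      rw [hmajor, Finset.mem_coe, Finset.mem_filter, Finset.mem_Ico] at ha hb
      exact hF.2.2.2.1 a ha.1.2 b hb.1.2 hab
    calc major.card = (major.image F).card := (Finset.card_image_of_injOn hinj).symm
      _ = (↑(major.image F) : Set V).ncard := (Set.ncard_coe_finset _).symm
      _ ≤ _ := Set.ncard_le_ncard himg (Set.toFinite _)
  have hdy : 1 ≤ ndeg G y := by
    have : x ∈ G.neighborSet y := hadj.symm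
    rw [ndeg]
    have := Set.ncard_pos (Set.toFinite (G.neighborSet y)) |>.mpr ⟨x, this⟩
    omega
  have hdyΔ := hdeg y
  omega

end VAL

theorem vizing_stmt_3 [Fintype V] (G : SimpleGraph V) (Δ : ℕ)
    (hcrit : IsDeltaCritical G Δ) (T : Set V) (hT : IsIndep G T) :
    ∀ x ∉ T, ∀ y ∈ T, G.Adj x y →
      ndeg (betweenGraph G T) x + 1 + {z : V | z ∉ T ∧ G.Adj x z ∧ ndeg G z < Δ}.ncard ≤
        ndeg (betweenGraph G T) y + {y' ∈ T | ndeg G y' = Δ}.ncard := by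
  classical
  intro x hxT y hyT hadj
  obtain ⟨hiso, ⟨hdeg, -⟩, hchromG, hchromDel⟩ := hcrit
  have hchromE : chromIdx (G.deleteEdges {s(x, y)}) = Δ :=
    hchromDel s(x, y) ((SimpleGraph.mem_edgeSet G).mpr hadj)
  have hval := vizing_adjacency hadj hchromG hchromE hdeg
  set D : Set V := {z : V | z ≠ y ∧ G.Adj x z ∧ ndeg G z = Δ} with hD
  set σ : Set V := {z : V | z ∉ T ∧ G.Adj x z ∧ ndeg G z < Δ} with hσ
  set B : Set V := G.neighborSet x \ T with hB
  -- H*-degree of x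
  have hnx : ndeg (betweenGraph G T) x = (G.neighborSet x ∩ T).ncard := by
    rw [ndeg]
    congr 1
    ext z
    constructor
    · rintro ⟨h1, h2 | h2⟩
      · exact ⟨h1, h2.2⟩
      · exact absurd h2.1 hxT
    · rintro ⟨h1, h2⟩
      exact ⟨h1, Or.inl ⟨hxT, h2⟩⟩
  -- H*-degree of y
  have hny : ndeg (betweenGraph G T) y = ndeg G y := by
    rw [ndeg, ndeg]
    congr 1
    ext z
    constructor
    · rintro ⟨h1, -⟩
      exact h1
    · intro h1
      refine ⟨h1, Or.inr ⟨hyT, fun hzT => ?_⟩⟩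
      exact hT y hyT z hzT h1
  have hsplitx : (G.neighborSet x ∩ T).ncard + B.ncard = ndeg G x := by
    rw [hB, ndeg]
    exact Set.ncard_inter_add_ncard_diff_eq_ncard _ _ (Set.toFinite _)
  have hdx : ndeg G x ≤ Δ := hdeg x
  have hDT : (D ∩ T).ncard ≤ {y' ∈ T | ndeg G y' = Δ}.ncard := by
    apply Set.ncard_le_ncard _ (Set.toFinite _)
    rintro z ⟨⟨-, -, h3⟩, h4⟩
    exact ⟨h4, h3⟩
  have hDB : (D \ T).ncard + σ.ncard ≤ B.ncard := by
    have hsub : (D \ T) ∪ σ ⊆ B := by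
      rintro z (⟨⟨-, h2, -⟩, h4⟩ | ⟨h1, h2, -⟩)
      · exact ⟨h2, h4⟩
      · exact ⟨h2, h1⟩
    have hdisj : Disjoint (D \ T) σ := by
      rw [Set.disjoint_left]
      rintro z ⟨⟨-, -, h3⟩, -⟩ ⟨-, -, h6⟩
      omega
    calc (D \ T).ncard + σ.ncard = ((D \ T) ∪ σ).ncard :=
          (Set.ncard_union_eq hdisj (Set.toFinite _) (Set.toFinite _)).symm
      _ ≤ B.ncard := Set.ncard_le_ncard hsub (Set.toFinite _)
  have hDsplit : (D ∩ T).ncard + (D \ T).ncard = D.ncard :=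
    Set.ncard_inter_add_ncard_diff_eq_ncard _ _ (Set.toFinite _)
  rw [hnx, hny]
  omega

end VizingTwoFactor
end

section
/- Let G be a graph without a 2-factor and let (S,T) be a minimum barrier, i.e., disjoint sets with δ_G(S,T) ≤ −2 minimizing |S ∪ T|. Then T is an independent set in G. -/
open SimpleGraph

namespace VizingTwoFactor

variable {V : Type*}

section Aux
open Classical

variable [Fintype V] {G : SimpleGraph V}

lemma mem_csupp {U : Set V} {C : (G.induce U).ConnectedComponent} {x : V} :
    x ∈ csupp G U C ↔ ∃ h : x ∈ U, (G.induce U).connectedComponentMk ⟨x, h⟩ = C := by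
  constructor
  · rintro ⟨y, hy, rfl⟩
    exact ⟨y.2, by simpa [ConnectedComponent.mem_supp_iff] using hy⟩
  · rintro ⟨h, hc⟩
    exact ⟨⟨x, h⟩, by simpa [ConnectedComponent.mem_supp_iff] using hc, rfl⟩

lemma csupp_subset {U : Set V} (C : (G.induce U).ConnectedComponent) : csupp G U C ⊆ U := by
  rintro x ⟨y, _, rfl⟩; exact y.2

lemma csupp_eq_of_mem {U : Set V} {C D : (G.induce U).ConnectedComponent} {x : V}
    (hC : x ∈ csupp G U C) (hD : x ∈ csupp G U D) : C = D := by
  rw [mem_csupp] at hC hD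
  obtain ⟨h1, e1⟩ := hC; obtain ⟨h2, e2⟩ := hD
  rw [← e1, ← e2]

lemma finsum_mem_toFinset (s : Set V) (f : V → ℤ) :
    (∑ᶠ x ∈ s, f x) = ∑ x ∈ s.toFinset, f x := by
  conv_lhs => rw [← Set.coe_toFinset s]
  rw [finsum_mem_coe_finset]

lemma even_sum_inner (T : Set V) :
    Even (∑ w ∈ T.toFinset, (G.neighborSet w ∩ T).ncard) := by
  have key : ∀ x : T, (G.neighborSet ↑x ∩ T).ncard = (G.induce T).degree x := by
    intro x
    have himg : Subtype.val '' ((G.induce T).neighborSet x) = G.neighborSet ↑x ∩ T := by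
      ext w
      constructor
      · rintro ⟨y, hy, rfl⟩; exact ⟨hy, y.2⟩
      · rintro ⟨hw, hwT⟩; exact ⟨⟨w, hwT⟩, hw, rfl⟩
    rw [← himg, Set.ncard_image_of_injective _ Subtype.val_injective]
    rw [← SimpleGraph.card_neighborSet_eq_degree, Set.ncard_eq_toFinset_card', Set.toFinset_card]
  have hsum : ∑ w ∈ T.toFinset, (G.neighborSet w ∩ T).ncard
      = ∑ x : T, (G.induce T).degree x := by
    rw [← Finset.sum_coe_sort T.toFinset]
    apply Finset.sum_bij (fun (x : T.toFinset) _ => (⟨x, Set.mem_toFinset.mp x.2⟩ : T))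
    · intros; exact Finset.mem_univ _
    · intro a _ b _ h; exact Subtype.ext (congrArg (fun z : T => (z : V)) h)
    · intro b _; exact ⟨⟨b, by simp [b.2]⟩, Finset.mem_univ _, rfl⟩
    · intro a _; exact key ⟨a, Set.mem_toFinset.mp a.2⟩
  rw [hsum, SimpleGraph.sum_degrees_eq_twice_card_edges]
  exact even_two_mul _

lemma sum_outer_eq (U T : Set V) :
    ∑ w ∈ T.toFinset, (G.neighborSet w ∩ U).ncard
      = {p : V × V | p.1 ∈ U ∧ p.2 ∈ T ∧ G.Adj p.1 p.2}.ncard := by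
  rw [Set.ncard_eq_toFinset_card']
  rw [Finset.card_eq_sum_card_fiberwise (f := Prod.snd) (t := T.toFinset)
    (by intro p hp; simp only [Finset.mem_coe, Set.mem_toFinset, Set.mem_setOf_eq] at hp ⊢; exact hp.2.1)]
  apply Finset.sum_congr rfl
  intro w hwT
  rw [Set.ncard_eq_toFinset_card']
  apply Finset.card_bij (fun u _ => (u, w))
  · intro u hu
    simp only [Set.mem_toFinset, Set.mem_inter_iff, mem_neighborSet] at hu
    simp only [Finset.mem_filter, Set.mem_toFinset, Set.mem_setOf_eq]
    exact ⟨⟨hu.2, Set.mem_toFinset.mp hwT, hu.1.symm⟩, trivial⟩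
  · intro a _ b _ h; exact congrArg Prod.fst h
  · rintro ⟨a, b⟩ hb
    simp only [Finset.mem_filter, Set.mem_toFinset, Set.mem_setOf_eq] at hb
    obtain ⟨⟨h1, h2, h3⟩, rfl⟩ := hb
    exact ⟨a, by simp [Set.mem_toFinset, h1, h3.symm], rfl⟩

lemma outer_eq_comp_sum (U T : Set V) :
    {p : V × V | p.1 ∈ U ∧ p.2 ∈ T ∧ G.Adj p.1 p.2}.ncard
      = ∑ C : (G.induce U).ConnectedComponent, eBetween G (csupp G U C) T := by
  have hdecomp : {p : V × V | p.1 ∈ U ∧ p.2 ∈ T ∧ G.Adj p.1 p.2}.toFinset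
      = Finset.univ.biUnion (fun C : (G.induce U).ConnectedComponent =>
          {p : V × V | p.1 ∈ csupp G U C ∧ p.2 ∈ T ∧ G.Adj p.1 p.2}.toFinset) := by
    ext p
    simp only [Set.mem_toFinset, Set.mem_setOf_eq, Finset.mem_biUnion, Finset.mem_univ,
      true_and]
    constructor
    · rintro ⟨h1, h2, h3⟩
      exact ⟨(G.induce U).connectedComponentMk ⟨p.1, h1⟩, mem_csupp.mpr ⟨h1, rfl⟩, h2, h3⟩
    · rintro ⟨C, h1, h2, h3⟩
      exact ⟨csupp_subset C h1, h2, h3⟩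
  rw [Set.ncard_eq_toFinset_card', hdecomp, Finset.card_biUnion]
  · apply Finset.sum_congr rfl
    intro C _
    rw [eBetween, Set.ncard_eq_toFinset_card']
  · intro C _ D _ hCD
    rw [Function.onFun, Finset.disjoint_left]
    intro p hp hp'
    simp only [Set.mem_toFinset, Set.mem_setOf_eq] at hp hp'
    exact hCD (csupp_eq_of_mem hp.1 hp'.1)

lemma hNum_eq_filter (S T : Set V) :
    hNum G S T = (Finset.univ.filter (fun C : (G.induce (S ∪ T)ᶜ).ConnectedComponent =>
      Odd (eBetween G (csupp G (S ∪ T)ᶜ C) T))).card := by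
  rw [hNum, oddComps, Set.ncard_eq_toFinset_card', Set.toFinset_setOf]

set_option maxHeartbeats 1000000 in
lemma even_deltaST (G : SimpleGraph V) (S T : Set V) (hST : Disjoint S T) :
    Even (deltaST G S T) := by
  set U := (S ∪ T)ᶜ with hU
  have hSc : Sᶜ = T ∪ U := by
    ext x
    simp only [Set.mem_compl_iff, Set.mem_union, hU]
    constructor
    · intro hx
      by_cases hxT : x ∈ T
      · exact Or.inl hxT
      · exact Or.inr (by simp [hx, hxT])
    · rintro (hx | hx)
      · exact fun hxS => hST.ne_of_mem hxS hx rfl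
      · exact fun hxS => hx (Or.inl hxS)
  have hTU : ∀ w, Disjoint (G.neighborSet w ∩ T) (G.neighborSet w ∩ U) := by
    intro w
    apply Set.disjoint_left.mpr
    rintro x ⟨_, hxT⟩ ⟨_, hxU⟩
    exact hxU (Or.inr hxT)
  have hdeg : ∀ w, degIn G Sᶜ w
      = (G.neighborSet w ∩ T).ncard + (G.neighborSet w ∩ U).ncard := by
    intro w
    rw [degIn, hSc, Set.inter_union_distrib_left,
      Set.ncard_union_eq (hTU w) (Set.toFinite _) (Set.toFinite _)]
  -- total sum
  have hsum : (∑ w ∈ T.toFinset, degIn G Sᶜ w)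
      = (∑ w ∈ T.toFinset, (G.neighborSet w ∩ T).ncard)
        + ∑ w ∈ T.toFinset, (G.neighborSet w ∩ U).ncard := by
    rw [← Finset.sum_add_distrib]
    exact Finset.sum_congr rfl fun w _ => hdeg w
  obtain ⟨a, ha⟩ := even_sum_inner (G := G) T
  have hif : ∀ C : (G.induce U).ConnectedComponent,
      eBetween G (csupp G U C) T % 2
        = if Odd (eBetween G (csupp G U C) T) then 1 else 0 := by
    intro C
    rcases Nat.even_or_odd (eBetween G (csupp G U C) T) with h | h
    · simp [Nat.even_iff.mp h, Nat.not_odd_iff_even.mpr h]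
    · simp [Nat.odd_iff.mp h, h]
  have h2 : (∑ w ∈ T.toFinset, (G.neighborSet w ∩ U).ncard) % 2 = hNum G S T % 2 := by
    rw [sum_outer_eq, outer_eq_comp_sum, hNum_eq_filter, Finset.sum_nat_mod,
      Finset.sum_congr rfl fun C _ => hif C, Finset.sum_boole]
    rw [hU]
    refine congrArg (· % 2) ?_
    apply Finset.card_bij (fun C _ => C)
    · intro a ha
      simp only [Finset.mem_filter, Finset.mem_univ, true_and] at ha ⊢
      exact ha
    · intro a _ b _ h; exact h
    · intro b hb
      simp only [Finset.mem_filter, Finset.mem_univ, true_and] at hb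
      exact ⟨b, by simp only [Finset.mem_filter, Finset.mem_univ, true_and]; exact hb, rfl⟩
  -- assemble
  rw [deltaST]
  have hcast : (∑ᶠ w ∈ T, (degIn G Sᶜ w : ℤ)) = ((∑ w ∈ T.toFinset, degIn G Sᶜ w : ℕ) : ℤ) := by
    rw [finsum_mem_toFinset, Nat.cast_sum]
  rw [hcast, hsum]
  rw [Int.even_iff]
  have h1 : (∑ w ∈ T.toFinset, (G.neighborSet w ∩ T).ncard) = a + a := ha
  omega

open Classical in
lemma hNum_le (G : SimpleGraph V) (S T : Set V) (hST : Disjoint S T) {v : V} (hv : v ∈ T) :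
    hNum G S T ≤ hNum G S (T \ {v}) + (G.neighborSet v ∩ (S ∪ T)ᶜ).ncard := by
  set U : Set V := (S ∪ T)ᶜ with hU
  set U' : Set V := (S ∪ T \ {v})ᶜ with hU'
  have hvS : v ∉ S := fun h => hST.ne_of_mem h hv rfl
  have hUU' : U ⊆ U' := by
    intro x hx
    simp only [hU, Set.mem_compl_iff, Set.mem_union] at hx
    simp only [hU', Set.mem_compl_iff, Set.mem_union, Set.mem_diff]
    tauto
  have hU'mem : ∀ x ∈ U', x = v ∨ x ∈ U := by
    intro x hx
    by_cases hxv : x = v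
    · exact Or.inl hxv
    · refine Or.inr ?_
      simp only [hU', Set.mem_compl_iff, Set.mem_union, Set.mem_diff] at hx
      simp only [hU, Set.mem_compl_iff, Set.mem_union]
      push_neg at hx ⊢
      exact ⟨hx.1, fun hT => absurd (hx.2 hT) hxv⟩
  -- the inclusion homomorphism
  let f : G.induce U →g G.induce U' :=
    ⟨fun x => ⟨x.1, hUU' x.2⟩, fun {a b} h => h⟩
  -- walks in U' starting in a component avoiding v stay in that component
  have stays : ∀ (C : (G.induce U).ConnectedComponent),
      (∀ u ∈ csupp G U C, ¬ G.Adj v u) →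
      ∀ {a b : ↥U'} (_ : (G.induce U').Walk a b), ↑a ∈ csupp G U C → ↑b ∈ csupp G U C := by
    intro C hnadj a b p
    induction p with
    | nil => exact id
    | @cons a a' b hadj q ih =>
      intro ha
      apply ih
      have hadj' : G.Adj ↑a ↑a' := hadj
      rcases hU'mem _ a'.2 with h | h
      · exact absurd (h ▸ hadj'.symm) (hnadj _ ha)
      · have haU : (a : V) ∈ U := csupp_subset C ha
        obtain ⟨hmem, hC⟩ := mem_csupp.mp ha
        have : (G.induce U).connectedComponentMk ⟨↑a', h⟩
            = (G.induce U).connectedComponentMk ⟨↑a, hmem⟩ := by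
          apply ConnectedComponent.connectedComponentMk_eq_of_adj
          exact hadj'.symm
        exact mem_csupp.mpr ⟨h, this.trans hC⟩
  -- components avoiding v keep their support
  have hmap : ∀ (C : (G.induce U).ConnectedComponent),
      (∀ u ∈ csupp G U C, ¬ G.Adj v u) →
      csupp G U' (C.map f) = csupp G U C := by
    intro C hnadj
    apply Set.Subset.antisymm
    · rintro x hx
      obtain ⟨hxU', hxC⟩ := mem_csupp.mp hx
      obtain ⟨y, hy⟩ := C.exists_rep
      have hyC : (y : V) ∈ csupp G U C := mem_csupp.mpr ⟨y.2, by
        cases y; exact hy⟩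
      have hmk : (C.map f) = (G.induce U').connectedComponentMk (f y) := by
        rw [← hy]; rfl
      have hreach : (G.induce U').Reachable (f y) ⟨x, hxU'⟩ := by
        rw [← ConnectedComponent.eq, ← hmk, hxC]
      obtain ⟨p⟩ := hreach
      exact stays C hnadj p hyC
    · rintro x hx
      obtain ⟨hxU, hxC⟩ := mem_csupp.mp hx
      refine mem_csupp.mpr ⟨hUU' hxU, ?_⟩
      rw [← hxC]
      rfl
  -- edge counts to T vs T \ {v} agree for components avoiding v
  have hodd : ∀ (C : (G.induce U).ConnectedComponent),
      (∀ u ∈ csupp G U C, ¬ G.Adj v u) →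
      eBetween G (csupp G U C) (T \ {v}) = eBetween G (csupp G U C) T := by
    intro C hnadj
    unfold eBetween
    congr 1
    ext ⟨a, b⟩
    simp only [Set.mem_setOf_eq, Set.mem_diff, Set.mem_singleton_iff]
    constructor
    · rintro ⟨h1, ⟨h2, _⟩, h3⟩; exact ⟨h1, h2, h3⟩
    · rintro ⟨h1, h2, h3⟩
      refine ⟨h1, ⟨h2, fun hbv => ?_⟩, h3⟩
      exact hnadj a h1 (hbv ▸ h3.symm)
  -- the injection
  have hinj : ∃ Φ : ↥(oddComps G S T) →
      (↥(oddComps G S (T \ {v})) ⊕ ↥(G.neighborSet v ∩ U)), Function.Injective Φ := by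
    refine ⟨fun ⟨C, hC⟩ =>
      if h : ∃ u, u ∈ csupp G U C ∧ G.Adj v u
      then Sum.inr ⟨h.choose, h.choose_spec.2, csupp_subset C h.choose_spec.1⟩
      else Sum.inl ⟨C.map f, ?_⟩, ?_⟩
    · -- φ C is an odd component
      have hnadj : ∀ u ∈ csupp G U C, ¬ G.Adj v u := by
        push_neg at h; exact fun u hu => h u hu
      show Odd (eBetween G (csupp G U' (C.map f)) (T \ {v}))
      rw [hmap C hnadj, hodd C hnadj]
      exact hC
    · rintro ⟨C, hC⟩ ⟨D, hD⟩ heq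
      by_cases h1 : ∃ u, u ∈ csupp G U C ∧ G.Adj v u
        <;> by_cases h2 : ∃ u, u ∈ csupp G U D ∧ G.Adj v u
        <;> simp only [h1, h2, dif_pos, dif_neg, not_false_iff, reduceDIte] at heq
      · -- both inr
        have := congrArg (fun x => match x with | Sum.inr y => (y : V) | Sum.inl _ => v) heq
        simp only at this
        have hCu := h1.choose_spec.1
        have hDu := h2.choose_spec.1
        rw [this] at hCu
        exact Subtype.ext (csupp_eq_of_mem hCu hDu)
      · exact absurd heq (by simp)
      · exact absurd heq (by simp)
      · -- both inl
        have hmapeq : C.map f = D.map f := by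
          have := congrArg (fun x => match x with
            | Sum.inl y => (y : (G.induce U').ConnectedComponent) | Sum.inr _ => C.map f) heq
          simpa using this
        push_neg at h1 h2
        have hs : csupp G U C = csupp G U D := by
          rw [← hmap C (fun u hu => h1 u hu), ← hmap D (fun u hu => h2 u hu), hmapeq]
        obtain ⟨y, hy⟩ := C.exists_rep
        have hyC : (y : V) ∈ csupp G U C := mem_csupp.mpr ⟨y.2, by cases y; exact hy⟩
        have hyD : (y : V) ∈ csupp G U D := hs ▸ hyC
        exact Subtype.ext (csupp_eq_of_mem hyC hyD)
  obtain ⟨Φ, hΦ⟩ := hinj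
  have := Nat.card_le_card_of_injective Φ hΦ
  rwa [Nat.card_sum, Nat.card_coe_set_eq, Nat.card_coe_set_eq,
    Nat.card_coe_set_eq] at this

end Aux

theorem vizing_stmt_7 [Fintype V] (G : SimpleGraph V) (S T : Set V)
    (hG : ¬ HasTwoFactor G) (hmin : IsMinBarrier G S T) : IsIndep G T := by
  classical
  intro x hx y hy hadj
  obtain ⟨⟨hdisj, hδ⟩, hminimal⟩ := hmin
  have hxy : x ≠ y := hadj.ne
  have hyS : y ∉ S := fun h => hdisj.ne_of_mem h hy rfl
  set U : Set V := (S ∪ T)ᶜ with hU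
  set n : ℕ := (G.neighborSet y ∩ U).ncard with hn
  -- merge bound
  have f1 : hNum G S T ≤ hNum G S (T \ {y}) + n := hNum_le G S T hdisj hy
  -- degree bound
  have f2 : n + 1 ≤ degIn G Sᶜ y := by
    have hsub : insert x (G.neighborSet y ∩ U) ⊆ G.neighborSet y ∩ Sᶜ := by
      rintro z hz
      rcases Set.mem_insert_iff.mp hz with rfl | ⟨hz1, hz2⟩
      · exact ⟨hadj.symm, fun hzS => hdisj.ne_of_mem hzS hx rfl⟩
      · exact ⟨hz1, fun hzS => hz2 (Or.inl hzS)⟩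
    have hxnot : x ∉ G.neighborSet y ∩ U := fun h => h.2 (Or.inr hx)
    calc n + 1 = (insert x (G.neighborSet y ∩ U)).ncard := by
          rw [Set.ncard_insert_of_notMem hxnot (Set.toFinite _)]
      _ ≤ _ := Set.ncard_le_ncard hsub (Set.toFinite _)
  -- sum split
  have f3 : (∑ᶠ w ∈ T, (degIn G Sᶜ w : ℤ))
      = (∑ᶠ w ∈ T \ {y}, (degIn G Sᶜ w : ℤ)) + (degIn G Sᶜ y : ℤ) := by
    conv_lhs => rw [show T = (T \ {y}) ∪ {y} from
      (Set.diff_union_of_subset (Set.singleton_subset_iff.mpr hy)).symm]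
    rw [finsum_mem_union (Set.disjoint_singleton_right.mpr (by simp))
      (Set.toFinite _) (Set.toFinite _), finsum_mem_singleton]
  -- cardinality split
  have f4 : (T \ {y}).ncard + 1 = T.ncard :=
    Set.ncard_diff_singleton_add_one hy T.toFinite
  -- parity
  have f5 : Even (deltaST G S (T \ {y})) :=
    even_deltaST G S (T \ {y}) (hdisj.mono_right Set.diff_subset)
  -- the smaller pair is a barrier
  have zf1 : (hNum G S T : ℤ) ≤ hNum G S (T \ {y}) + n := by exact_mod_cast f1
  have zf2 : (n : ℤ) + 1 ≤ degIn G Sᶜ y := by exact_mod_cast f2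
  have zf4 : ((T \ {y}).ncard : ℤ) + 1 = T.ncard := by exact_mod_cast f4
  have hδ' : deltaST G S (T \ {y}) ≤ -2 := by
    have hle : deltaST G S (T \ {y}) ≤ -1 := by
      rw [deltaST] at hδ ⊢
      rw [f3] at hδ
      linarith
    obtain ⟨k, hk⟩ := f5
    rw [hk] at hle ⊢
    omega
  have hbar' : IsBarrier G S (T \ {y}) := ⟨hdisj.mono_right Set.diff_subset, hδ'⟩
  have hcon := hminimal S (T \ {y}) hbar'
  have hss : S ∪ (T \ {y}) ⊂ S ∪ T := by
    constructor
    · exact Set.union_subset_union_right S Set.diff_subset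
    · intro hsub
      rcases hsub (Or.inr hy) with h | h
      · exact hyS h
      · exact h.2 rfl
  have hlt : (S ∪ (T \ {y})).ncard < (S ∪ T).ncard :=
    Set.ncard_lt_ncard hss (Set.toFinite _)
  exact absurd hcon hlt.not_ge

end VizingTwoFactor
end
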